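/- arXiv:1710.06534 — 4 statements merged into one kernel-verified Lean document; each statement's English description precedes it below -/
import Mathlib

section
/- Let φ, ψ ∈ ℂ[x] be monic polynomials with deg φ < deg ψ. Let X = span_ℂ{φ², φψ, ψ²} and √X = span_ℂ{φ, ψ}. Then X is real if and only if √X is real. -/
open Polynomial

/-- A subspace `X ⊆ ℂ[x]` is real if it has a `ℂ`-basis consisting of polynomials all of
whose coefficients are real. -/
def IsRealSubspace (X : Submodule ℂ (Polynomial ℂ)) : Prop :=
  ∃ (ι : Type) (b : Module.Basis ι ℂ X), ∀ i, ∀ k, ((b i : Polynomial ℂ).coeff k).im = 0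

noncomputable def cP (p : Polynomial ℂ) : Polynomial ℂ := p.map (starRingEnd ℂ)

lemma cP_coeff (p : Polynomial ℂ) (k : ℕ) :
    (cP p).coeff k = (starRingEnd ℂ) (p.coeff k) := coeff_map _ _

lemma real_iff (p : Polynomial ℂ) : cP p = p ↔ ∀ k, (p.coeff k).im = 0 := by
  simp [cP, Polynomial.ext_iff, coeff_map, Complex.conj_eq_iff_im]

lemma cP_add (p q : Polynomial ℂ) : cP (p + q) = cP p + cP q := Polynomial.map_add _
lemma cP_mul (p q : Polynomial ℂ) : cP (p * q) = cP p * cP q := Polynomial.map_mul _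
lemma cP_pow (p : Polynomial ℂ) (n : ℕ) : cP (p ^ n) = cP p ^ n := Polynomial.map_pow _ _
lemma cP_C (a : ℂ) : cP (C a) = C ((starRingEnd ℂ) a) := map_C _
lemma cP_smul (a : ℂ) (p : Polynomial ℂ) : cP (a • p) = (starRingEnd ℂ) a • cP p := by
  ext k; simp [cP_coeff, coeff_smul]
lemma cP_cP (p : Polynomial ℂ) : cP (cP p) = p := by
  ext k; simp [cP_coeff]
lemma cP_monic {p : Polynomial ℂ} (hp : p.Monic) : (cP p).Monic := hp.map _

/-- A real subspace is stable under coefficientwise conjugation. -/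
lemma conj_mem {X : Submodule ℂ (Polynomial ℂ)} (h : IsRealSubspace X)
    {x : Polynomial ℂ} (hx : x ∈ X) : cP x ∈ X := by
  obtain ⟨ι, b, hb⟩ := h
  have hXeq : X = Submodule.span ℂ (Subtype.val '' Set.range ⇑b) := by
    conv_lhs => rw [show X = Submodule.map X.subtype ⊤ from by
      rw [Submodule.map_top, Submodule.range_subtype]]
    rw [← b.span_eq, Submodule.map_span]
    rfl
  rw [hXeq] at hx
  rw [hXeq]
  induction hx using Submodule.span_induction with
  | mem y hy =>
      obtain ⟨z, ⟨i, rfl⟩, rfl⟩ := hy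
      have : cP ((b i : Polynomial ℂ)) = (b i : Polynomial ℂ) := (real_iff _).mpr (hb i)
      rw [this]
      exact Submodule.subset_span ⟨b i, ⟨i, rfl⟩, rfl⟩
  | zero => simpa [cP] using Submodule.zero_mem _
  | add y z _ _ hy hz => rw [cP_add]; exact Submodule.add_mem _ hy hz
  | smul c y _ hy => rw [cP_smul]; exact Submodule.smul_mem _ _ hy

lemma mem_span_triple {p q r x : Polynomial ℂ}
    (h : x ∈ Submodule.span ℂ ({p, q, r} : Set (Polynomial ℂ))) :
    ∃ a b c : ℂ, x = a • p + b • q + c • r := by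
  rw [Submodule.mem_span_insert] at h
  obtain ⟨a, z, hz, rfl⟩ := h
  obtain ⟨b, c, rfl⟩ := Submodule.mem_span_pair.mp hz
  exact ⟨a, b, c, by ring⟩

lemma li_pair {p q : Polynomial ℂ} (hp : p ≠ 0) (hq : q.Monic)
    (h : p.natDegree < q.natDegree) : LinearIndependent ℂ ![p, q] := by
  rw [LinearIndependent.pair_iff]
  intro s t hst
  have ht : t = 0 := by
    have := congrArg (fun r => r.coeff q.natDegree) hst
    simpa [coeff_smul, coeff_eq_zero_of_natDegree_lt h, hq.coeff_natDegree] using this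
  subst ht
  simp only [zero_smul, add_zero] at hst
  rcases smul_eq_zero.mp hst with hs | hs
  · exact ⟨hs, rfl⟩
  · exact absurd hs hp

lemma li_triple {p q r : Polynomial ℂ} (hp : p ≠ 0) (hq : q.Monic) (hr : r.Monic)
    (h1 : p.natDegree < q.natDegree) (h2 : q.natDegree < r.natDegree) :
    LinearIndependent ℂ ![p, q, r] := by
  rw [Fintype.linearIndependent_iff]
  intro g hg
  rw [Fin.sum_univ_three] at hg
  simp only [Matrix.cons_val_zero, Matrix.cons_val_one, Matrix.head_cons,
    Matrix.cons_val_two, Matrix.tail_cons] at hg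
  have h3 : g 2 = 0 := by
    have := congrArg (fun y => y.coeff r.natDegree) hg
    simpa [coeff_smul, coeff_eq_zero_of_natDegree_lt (h1.trans h2),
      coeff_eq_zero_of_natDegree_lt h2, hr.coeff_natDegree] using this
  rw [h3, zero_smul, add_zero] at hg
  have h4 : g 1 = 0 := by
    have := congrArg (fun y => y.coeff q.natDegree) hg
    simpa [coeff_smul, coeff_eq_zero_of_natDegree_lt h1, hq.coeff_natDegree] using this
  rw [h4, zero_smul, add_zero] at hg
  have h5 : g 0 = 0 := by
    rcases smul_eq_zero.mp hg with hs | hs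
    · exact hs
    · exact absurd hs hp
  intro i; fin_cases i <;> assumption

lemma real_span_range {n : ℕ} (v : Fin n → Polynomial ℂ) (hli : LinearIndependent ℂ v)
    (hreal : ∀ i k, ((v i).coeff k).im = 0) :
    IsRealSubspace (Submodule.span ℂ (Set.range v)) :=
  ⟨Fin n, Module.Basis.span hli, fun i k => by rw [Module.Basis.span_apply]; exact hreal i k⟩

/-- Let `φ, ψ ∈ ℂ[x]` be monic with `deg φ < deg ψ`.  Let `X = span{φ², φψ, ψ²}` and
`√X = span{φ, ψ}`.  Then `X` is real iff `√X` is real. -/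
theorem stmt4 (φ ψ : Polynomial ℂ) (hφ : φ.Monic) (hψ : ψ.Monic)
    (hdeg : φ.degree < ψ.degree) :
    IsRealSubspace (Submodule.span ℂ {φ ^ 2, φ * ψ, ψ ^ 2}) ↔
      IsRealSubspace (Submodule.span ℂ {φ, ψ}) := by
  have hde : φ.natDegree < ψ.natDegree := natDegree_lt_natDegree hφ.ne_zero hdeg
  have hφ0 : φ ≠ 0 := hφ.ne_zero
  have hψ0 : ψ ≠ 0 := hψ.ne_zero
  -- key intermediate property
  have key : ∀ a : ℂ, cP φ = φ → cP ψ = ψ + C a * φ →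
      IsRealSubspace (Submodule.span ℂ {φ ^ 2, φ * ψ, ψ ^ 2}) ∧
      IsRealSubspace (Submodule.span ℂ {φ, ψ}) := by
    intro a hφr hψa
    -- a is purely imaginary
    have haa : (starRingEnd ℂ) a = -a := by
      have h1 : cP (cP ψ) = ψ := cP_cP ψ
      rw [hψa, cP_add, cP_mul, cP_C, hψa, hφr] at h1
      have h2 : C ((starRingEnd ℂ) a + a) * φ = 0 := by
        rw [map_add]; linear_combination h1
      rcases mul_eq_zero.mp h2 with h | h
      · exact eq_neg_of_add_eq_zero_left (Polynomial.C_eq_zero.mp h)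
      · exact absurd h hφ0
    have haa' : (starRingEnd ℂ) a = -a := haa
    -- the real replacement for ψ
    set χ : Polynomial ℂ := ψ + C (a/2) * φ with hχ
    have hCsum : C a = C (a/2) + C (a/2) := by rw [← map_add]; norm_num
    have hχr : cP χ = χ := by
      rw [hχ, cP_add, cP_mul, cP_C, hψa, hφr]
      have : (starRingEnd ℂ) (a/2) = -(a/2) := by
        rw [map_div₀, haa, map_ofNat]; ring
      rw [this, map_neg]
      linear_combination φ * hCsum
    have hχreal : ∀ k, (χ.coeff k).im = 0 := (real_iff χ).mp hχr
    have hφreal : ∀ k, (φ.coeff k).im = 0 := (real_iff φ).mp hφr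
    have hχm : χ.Monic := by
      refine hψ.add_of_left ?_
      calc (C (a/2) * φ).degree ≤ φ.degree := by
            simpa [smul_eq_C_mul] using degree_smul_le (a/2) φ
        _ < ψ.degree := hdeg
    have hχdeg : χ.natDegree = ψ.natDegree := by
      apply natDegree_eq_of_degree_eq
      rw [hχ]
      apply degree_add_eq_left_of_degree_lt
      calc (C (a/2) * φ).degree ≤ φ.degree := by
            simpa [smul_eq_C_mul] using degree_smul_le (a/2) φ
        _ < ψ.degree := hdeg
    have hχ0 : χ ≠ 0 := hχm.ne_zero
    constructor
    · -- X is real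
      have hspan : Submodule.span ℂ ({φ ^ 2, φ * ψ, ψ ^ 2} : Set (Polynomial ℂ))
          = Submodule.span ℂ (Set.range ![φ ^ 2, φ * χ, χ ^ 2]) := by
        have hrange : Set.range ![φ ^ 2, φ * χ, χ ^ 2]
            = ({φ ^ 2, φ * χ, χ ^ 2} : Set (Polynomial ℂ)) := by
          ext x; simp [Set.ext_iff]; tauto
        rw [hrange]
        apply le_antisymm <;> rw [Submodule.span_le] <;>
          refine Set.insert_subset_iff.mpr ⟨?_, Set.insert_subset_iff.mpr ⟨?_, Set.singleton_subset_iff.mpr ?_⟩⟩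
        · exact Submodule.subset_span (by simp)
        · -- φψ ∈ span {φ², φχ, χ²}
          have : φ * ψ = φ * χ + (-(a/2)) • φ ^ 2 := by
            rw [hχ, smul_eq_C_mul, map_neg]; ring
          rw [this]
          exact Submodule.add_mem _ (Submodule.subset_span (by simp))
            (Submodule.smul_mem _ _ (Submodule.subset_span (by simp)))
        · -- ψ² ∈ span
          have : ψ ^ 2 = χ ^ 2 + (-a) • (φ * χ) + (a^2/4) • φ ^ 2 := by
            rw [hχ, smul_eq_C_mul, smul_eq_C_mul, map_neg,
              show (a^2/4 : ℂ) = (a/2) * (a/2) by ring, map_mul, hCsum]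
            ring
          rw [this]
          exact Submodule.add_mem _ (Submodule.add_mem _ (Submodule.subset_span (by simp))
            (Submodule.smul_mem _ _ (Submodule.subset_span (by simp))))
            (Submodule.smul_mem _ _ (Submodule.subset_span (by simp)))
        · exact Submodule.subset_span (by simp)
        · have : φ * χ = φ * ψ + (a/2) • φ ^ 2 := by
            rw [hχ, smul_eq_C_mul]; ring
          rw [this]
          exact Submodule.add_mem _ (Submodule.subset_span (by simp))
            (Submodule.smul_mem _ _ (Submodule.subset_span (by simp)))
        · have : χ ^ 2 = ψ ^ 2 + a • (φ * ψ) + (a^2/4) • φ ^ 2 := by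
            rw [hχ, smul_eq_C_mul, smul_eq_C_mul,
              show (a^2/4 : ℂ) = (a/2) * (a/2) by ring, map_mul, hCsum]
            ring
          rw [this]
          exact Submodule.add_mem _ (Submodule.add_mem _ (Submodule.subset_span (by simp))
            (Submodule.smul_mem _ _ (Submodule.subset_span (by simp))))
            (Submodule.smul_mem _ _ (Submodule.subset_span (by simp)))
      rw [hspan]
      refine real_span_range _ ?_ ?_
      · refine li_triple (pow_ne_zero 2 hφ0) (hφ.mul hχm) (hχm.pow 2) ?_ ?_
        · rw [natDegree_pow, natDegree_mul hφ0 hχ0, hχdeg]; omega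
        · rw [natDegree_pow, natDegree_mul hφ0 hχ0, hχdeg]; omega
      · intro i k
        have h1 : ∀ k, ((φ ^ 2).coeff k).im = 0 := (real_iff (φ ^ 2)).mp (by rw [cP_pow, hφr])
        have h2 : ∀ k, ((φ * χ).coeff k).im = 0 := (real_iff (φ * χ)).mp (by rw [cP_mul, hφr, hχr])
        have h3 : ∀ k, ((χ ^ 2).coeff k).im = 0 := (real_iff (χ ^ 2)).mp (by rw [cP_pow, hχr])
        fin_cases i <;> simp only [Matrix.cons_val_zero, Matrix.cons_val_one, Matrix.head_cons,
          Matrix.cons_val_two, Matrix.tail_cons]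
        exacts [h1 k, h2 k, h3 k]
    · -- √X is real
      have hspan : Submodule.span ℂ ({φ, ψ} : Set (Polynomial ℂ))
          = Submodule.span ℂ (Set.range ![φ, χ]) := by
        have hrange : Set.range ![φ, χ] = ({φ, χ} : Set (Polynomial ℂ)) := by
          ext x; simp [Set.ext_iff]; tauto
        rw [hrange]
        apply le_antisymm <;> rw [Submodule.span_le] <;>
          refine Set.insert_subset_iff.mpr ⟨Submodule.subset_span (by simp),
            Set.singleton_subset_iff.mpr ?_⟩
        · have : ψ = χ + (-(a/2)) • φ := by rw [hχ, smul_eq_C_mul, map_neg]; ring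
          rw [this]
          exact Submodule.add_mem _ (Submodule.subset_span (by simp))
            (Submodule.smul_mem _ _ (Submodule.subset_span (by simp)))
        · have : χ = ψ + (a/2) • φ := by rw [hχ, smul_eq_C_mul]
          rw [this]
          exact Submodule.add_mem _ (Submodule.subset_span (by simp))
            (Submodule.smul_mem _ _ (Submodule.subset_span (by simp)))
      rw [hspan]
      refine real_span_range _ (li_pair hφ0 hχm (hχdeg ▸ hde)) ?_
      intro i k
      fin_cases i <;> simp only [Matrix.cons_val_zero, Matrix.cons_val_one, Matrix.head_cons]
      exacts [hφreal k, hχreal k]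
  constructor
  · -- X real → √X real
    intro hX
    -- Step A : cP φ = φ
    have hmem1 : cP (φ ^ 2) ∈ Submodule.span ℂ ({φ ^ 2, φ * ψ, ψ ^ 2} : Set (Polynomial ℂ)) :=
      conj_mem hX (Submodule.subset_span (by simp))
    obtain ⟨A, B, Cc, hABC⟩ := mem_span_triple hmem1
    rw [cP_pow] at hABC
    have hcφm : (cP φ).Monic := cP_monic hφ
    have hcφd : (cP φ).natDegree = φ.natDegree := hφ.natDegree_map _
    have hd2 : ((cP φ) ^ 2).natDegree = 2 * φ.natDegree := by rw [natDegree_pow, hcφd]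
    have hdφ2 : (φ ^ 2).natDegree = 2 * φ.natDegree := by rw [natDegree_pow]
    have hdφψ : (φ * ψ).natDegree = φ.natDegree + ψ.natDegree := natDegree_mul hφ0 hψ0
    have hdψ2 : (ψ ^ 2).natDegree = 2 * ψ.natDegree := by rw [natDegree_pow]
    have hC0 : Cc = 0 := by
      have := congrArg (fun y => y.coeff (2 * ψ.natDegree)) hABC |>.symm
      simpa [coeff_smul, coeff_eq_zero_of_natDegree_lt (show ((cP φ)^2).natDegree < 2 * ψ.natDegree by omega),
        coeff_eq_zero_of_natDegree_lt (show (φ^2).natDegree < 2 * ψ.natDegree by omega),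
        coeff_eq_zero_of_natDegree_lt (show (φ*ψ).natDegree < 2 * ψ.natDegree by omega),
        show (ψ^2).coeff (2 * ψ.natDegree) = 1 from hdψ2 ▸ (hψ.pow 2).coeff_natDegree] using this
    rw [hC0, zero_smul, add_zero] at hABC
    have hB0 : B = 0 := by
      have := congrArg (fun y => y.coeff (φ.natDegree + ψ.natDegree)) hABC |>.symm
      simpa [coeff_smul, coeff_eq_zero_of_natDegree_lt (show ((cP φ)^2).natDegree < φ.natDegree + ψ.natDegree by omega),
        coeff_eq_zero_of_natDegree_lt (show (φ^2).natDegree < φ.natDegree + ψ.natDegree by omega),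
        show (φ*ψ).coeff (φ.natDegree + ψ.natDegree) = 1 from hdφψ ▸ (hφ.mul hψ).coeff_natDegree] using this
    rw [hB0, zero_smul, add_zero] at hABC
    have hA1 : A = 1 := by
      have := congrArg (fun y => y.coeff (2 * φ.natDegree)) hABC |>.symm
      simpa [coeff_smul, show ((cP φ)^2).coeff (2 * φ.natDegree) = 1 from hd2 ▸ (hcφm.pow 2).coeff_natDegree,
        show (φ^2).coeff (2 * φ.natDegree) = 1 from hdφ2 ▸ (hφ.pow 2).coeff_natDegree] using this
    rw [hA1, one_smul] at hABC
    -- hABC : (cP φ)^2 = φ^2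
    have hsum_ne : cP φ + φ ≠ 0 := by
      intro h
      have := congrArg (fun y => y.coeff φ.natDegree) h
      simp [cP_coeff, hφ.coeff_natDegree] at this
    have hφr : cP φ = φ := by
      have hfac : (cP φ - φ) * (cP φ + φ) = 0 := by linear_combination hABC
      rcases mul_eq_zero.mp hfac with h | h
      · exact sub_eq_zero.mp h
      · exact absurd h hsum_ne
    -- Step B : cP ψ = ψ + C a φ
    have hmem2 : cP (φ * ψ) ∈ Submodule.span ℂ ({φ ^ 2, φ * ψ, ψ ^ 2} : Set (Polynomial ℂ)) :=
      conj_mem hX (Submodule.subset_span (by simp))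
    obtain ⟨A', B', C', hABC'⟩ := mem_span_triple hmem2
    rw [cP_mul, hφr] at hABC'
    have hcψm : (cP ψ).Monic := cP_monic hψ
    have hcψd : (cP ψ).natDegree = ψ.natDegree := hψ.natDegree_map _
    have hcψ0 : cP ψ ≠ 0 := hcψm.ne_zero
    have hdm : (φ * cP ψ).natDegree = φ.natDegree + ψ.natDegree := by
      rw [natDegree_mul hφ0 hcψ0, hcψd]
    have hC0' : C' = 0 := by
      have := congrArg (fun y => y.coeff (2 * ψ.natDegree)) hABC' |>.symm
      simpa [coeff_smul, coeff_eq_zero_of_natDegree_lt (show (φ * cP ψ).natDegree < 2 * ψ.natDegree by omega),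
        coeff_eq_zero_of_natDegree_lt (show (φ^2).natDegree < 2 * ψ.natDegree by omega),
        coeff_eq_zero_of_natDegree_lt (show (φ*ψ).natDegree < 2 * ψ.natDegree by omega),
        show (ψ^2).coeff (2 * ψ.natDegree) = 1 from hdψ2 ▸ (hψ.pow 2).coeff_natDegree] using this
    rw [hC0', zero_smul, add_zero] at hABC'
    have hB1 : B' = 1 := by
      have := congrArg (fun y => y.coeff (φ.natDegree + ψ.natDegree)) hABC' |>.symm
      simpa [coeff_smul, show (φ * cP ψ).coeff (φ.natDegree + ψ.natDegree) = 1 from hdm ▸ (hφ.mul hcψm).coeff_natDegree,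
        coeff_eq_zero_of_natDegree_lt (show (φ^2).natDegree < φ.natDegree + ψ.natDegree by omega),
        show (φ*ψ).coeff (φ.natDegree + ψ.natDegree) = 1 from hdφψ ▸ (hφ.mul hψ).coeff_natDegree] using this
    rw [hB1, one_smul] at hABC'
    -- hABC' : φ * cP ψ = A' • φ^2 + φ * ψ
    have hψa : cP ψ = ψ + C A' * φ := by
      apply mul_left_cancel₀ hφ0
      rw [hABC', smul_eq_C_mul]; ring
    exact (key A' hφr hψa).2
  · -- √X real → X real
    intro hX
    have hmem1 : cP φ ∈ Submodule.span ℂ ({φ, ψ} : Set (Polynomial ℂ)) :=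
      conj_mem hX (Submodule.subset_span (by simp))
    obtain ⟨s, t, hst⟩ := Submodule.mem_span_pair.mp hmem1
    have hcφd : (cP φ).natDegree = φ.natDegree := hφ.natDegree_map _
    have ht0 : t = 0 := by
      have := congrArg (fun y => y.coeff ψ.natDegree) hst
      simpa [coeff_smul, coeff_eq_zero_of_natDegree_lt hde,
        coeff_eq_zero_of_natDegree_lt (show (cP φ).natDegree < ψ.natDegree by omega),
        hψ.coeff_natDegree] using this
    rw [ht0, zero_smul, add_zero] at hst
    have hs1 : s = 1 := by
      have := congrArg (fun y => y.coeff φ.natDegree) hst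
      simpa [coeff_smul, hφ.coeff_natDegree, cP_coeff,
        show φ.coeff φ.natDegree = 1 from hφ.coeff_natDegree] using this
    rw [hs1, one_smul] at hst
    have hφr : cP φ = φ := hst.symm
    have hmem2 : cP ψ ∈ Submodule.span ℂ ({φ, ψ} : Set (Polynomial ℂ)) :=
      conj_mem hX (Submodule.subset_span (by simp))
    obtain ⟨s', t', hst'⟩ := Submodule.mem_span_pair.mp hmem2
    have hcψd : (cP ψ).natDegree = ψ.natDegree := hψ.natDegree_map _
    have ht1 : t' = 1 := by
      have := congrArg (fun y => y.coeff ψ.natDegree) hst'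
      simpa [coeff_smul, coeff_eq_zero_of_natDegree_lt hde, hψ.coeff_natDegree,
        show (cP ψ).coeff ψ.natDegree = 1 from hcψd ▸ (cP_monic hψ).coeff_natDegree] using this
    rw [ht1, one_smul] at hst'
    have hψa : cP ψ = ψ + C s' * φ := by rw [← hst', smul_eq_C_mul]; ring
    exact (key s' hφr hψa).1
end

section
/- Let φ, ψ ∈ ℂ[x] be linearly independent over ℂ and let X = span_ℂ{φ², φψ, ψ²}. Then dim_ℂ X = 3 and X^∨ = Wr(φ,ψ)·X; in particular X is self-dual. -/
open Module

/-- The Wronskian `Wr(f_1, …, f_m) = det((d/dx)^(i-1) f_j)` of `m` polynomials. -/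
noncomputable def wronskian (m : ℕ) (f : Fin m → Polynomial ℂ) : Polynomial ℂ :=
  (Matrix.of fun i j : Fin m =>
    (fun p : Polynomial ℂ => Polynomial.derivative p)^[(i : ℕ)] (f j)).det

/-- The dual set `X^∨` of an `N`-dimensional subspace `X ⊆ ℂ[x]`: the set of Wronskians
of `N - 1` elements of `X`. -/
def dualSet (N : ℕ) (X : Submodule ℂ (Polynomial ℂ)) : Set (Polynomial ℂ) :=
  {g | ∃ φ : Fin (N - 1) → Polynomial ℂ, (∀ i, φ i ∈ X) ∧ g = wronskian (N - 1) φ}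

/-- `X` is self-dual if `X^∨ = ψ · X` for some polynomial `ψ`. -/
def IsSelfDual (N : ℕ) (X : Submodule ℂ (Polynomial ℂ)) : Prop :=
  ∃ ψ : Polynomial ℂ, dualSet N X = (fun f => ψ * f) '' (X : Set (Polynomial ℂ))

lemma wr2 (f g : Polynomial ℂ) :
    wronskian 2 ![f, g] = f * Polynomial.derivative g - g * Polynomial.derivative f := by
  unfold wronskian
  simp [Matrix.det_fin_two]

lemma memtriple (x a b c : Polynomial ℂ) :
    x ∈ Submodule.span ℂ ({a, b, c} : Set (Polynomial ℂ)) ↔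
      ∃ p q r : ℂ, x = p • a + q • b + r • c := by
  constructor
  · intro hx
    rw [show ({a,b,c} : Set (Polynomial ℂ)) = insert a {b,c} from rfl,
      Submodule.mem_span_insert] at hx
    obtain ⟨p, z, hz, rfl⟩ := hx
    rw [Submodule.mem_span_pair] at hz
    obtain ⟨q, r, rfl⟩ := hz
    exact ⟨p, q, r, by ring⟩
  · rintro ⟨p, q, r, rfl⟩
    refine Submodule.add_mem _ (Submodule.add_mem _ ?_ ?_) ?_ <;>
      exact Submodule.smul_mem _ _ (Submodule.subset_span (by simp))

lemma keyid (φ ψ : Polynomial ℂ) (a b c d e f : ℂ) :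
    wronskian 2 ![a • φ^2 + b • (φ*ψ) + c • ψ^2, d • φ^2 + e • (φ*ψ) + f • ψ^2]
      = wronskian 2 ![φ, ψ] *
        ((a*e - b*d) • φ^2 + (2*(a*f - c*d)) • (φ*ψ) + (b*f - c*e) • ψ^2) := by
  simp only [wr2, Polynomial.smul_eq_C_mul, map_add, map_mul, map_sub, map_ofNat,
    Polynomial.derivative_C_mul, Polynomial.derivative_pow, Polynomial.derivative_mul,
    Polynomial.derivative_C]
  push_cast [map_ofNat]
  ring

lemma pairind {φ ψ : Polynomial ℂ} (h : LinearIndependent ℂ ![φ, ψ]) (a b : ℂ)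
    (hab : a • φ + b • ψ = 0) : a = 0 ∧ b = 0 := by
  have := Fintype.linearIndependent_iff.mp h ![a, b]
    (by simpa [Fin.sum_univ_two] using hab)
  exact ⟨this 0, this 1⟩

lemma tripind {φ ψ : Polynomial ℂ} (h : LinearIndependent ℂ ![φ, ψ]) (a b c : ℂ)
    (hab : a • φ^2 + b • (φ*ψ) + c • ψ^2 = 0) : a = 0 ∧ b = 0 ∧ c = 0 := by
  have hψ : ψ ≠ 0 := by
    intro h0
    exact one_ne_zero (pairind h 0 1 (by simp [h0])).2
  have ha : a = 0 := by
    by_contra ha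
    obtain ⟨s, hs⟩ : ∃ s : ℂ, s ^ 2 = b^2 - 4*a*c :=
      IsAlgClosed.exists_pow_nat_eq _ two_pos
    set t1 : ℂ := (-b + s) / (2*a) with ht1
    set t2 : ℂ := (-b - s) / (2*a) with ht2
    have h1 : a*t1 + a*t2 = -b := by
      rw [ht1, ht2]; field_simp; ring
    have h2 : a*(t1*t2) = c := by
      rw [ht1, ht2]; field_simp; linear_combination -hs
    have e1 : (Polynomial.C (a*t1 + a*t2) : Polynomial ℂ) = Polynomial.C (-b) := by rw [h1]
    have e2 : (Polynomial.C (a*(t1*t2)) : Polynomial ℂ) = Polynomial.C c := by rw [h2]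
    simp only [map_add, map_mul, map_neg] at e1 e2
    have key : Polynomial.C a * ((φ - Polynomial.C t1 * ψ) * (φ - Polynomial.C t2 * ψ)) = 0 := by
      rw [← hab]
      simp only [Polynomial.smul_eq_C_mul]
      linear_combination (-(φ*ψ)) * e1 + ψ^2 * e2
    rcases mul_eq_zero.mp key with h' | h'
    · exact ha (by simpa using h')
    rcases mul_eq_zero.mp h' with h'' | h''
    · have : (1:ℂ) • φ + (-t1) • ψ = 0 := by
        simp only [Polynomial.smul_eq_C_mul, map_one, map_neg]
        linear_combination h''
      exact one_ne_zero (pairind h 1 (-t1) this).1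
    · have : (1:ℂ) • φ + (-t2) • ψ = 0 := by
        simp only [Polynomial.smul_eq_C_mul, map_one, map_neg]
        linear_combination h''
      exact one_ne_zero (pairind h 1 (-t2) this).1
  subst ha
  have : ψ * (b • φ + c • ψ) = 0 := by
    simp only [Polynomial.smul_eq_C_mul, map_zero, zero_mul, zero_add] at hab ⊢
    linear_combination hab
  rcases mul_eq_zero.mp this with h' | h'
  · exact absurd h' hψ
  · exact ⟨rfl, pairind h b c h'⟩

/-- If `φ, ψ ∈ ℂ[x]` are linearly independent and `X = span{φ², φψ, ψ²}`, then
`dim X = 3` and `X^∨ = Wr(φ,ψ) · X`; in particular `X` is self-dual. -/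
theorem stmt11 (φ ψ : Polynomial ℂ) (h : LinearIndependent ℂ ![φ, ψ]) :
    finrank ℂ (Submodule.span ℂ {φ ^ 2, φ * ψ, ψ ^ 2}) = 3 ∧
    dualSet 3 (Submodule.span ℂ {φ ^ 2, φ * ψ, ψ ^ 2}) =
      (fun f => wronskian 2 ![φ, ψ] * f) ''
        ((Submodule.span ℂ {φ ^ 2, φ * ψ, ψ ^ 2} : Submodule ℂ (Polynomial ℂ)) :
          Set (Polynomial ℂ)) ∧
    IsSelfDual 3 (Submodule.span ℂ {φ ^ 2, φ * ψ, ψ ^ 2}) := by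
  have hrank : finrank ℂ (Submodule.span ℂ {φ ^ 2, φ * ψ, ψ ^ 2}) = 3 := by
    have hli : LinearIndependent ℂ ![φ^2, φ*ψ, ψ^2] := by
      rw [Fintype.linearIndependent_iff]
      intro g hg i
      have := tripind h (g 0) (g 1) (g 2) (by simpa [Fin.sum_univ_three] using hg)
      fin_cases i <;> simp [this.1, this.2.1, this.2.2]
    have hr : Set.range ![φ^2, φ*ψ, ψ^2] = ({φ^2, φ*ψ, ψ^2} : Set (Polynomial ℂ)) := by
      ext z
      simp [Matrix.range_cons, Matrix.range_empty]
      tauto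
    rw [← hr, finrank_span_eq_card hli, Fintype.card_fin]
  have hdual : dualSet 3 (Submodule.span ℂ {φ ^ 2, φ * ψ, ψ ^ 2}) =
      (fun f => wronskian 2 ![φ, ψ] * f) ''
        ((Submodule.span ℂ {φ ^ 2, φ * ψ, ψ ^ 2} : Submodule ℂ (Polynomial ℂ)) :
          Set (Polynomial ℂ)) := by
    ext x
    constructor
    · rintro ⟨v, hv, rfl⟩
      have hv' : v = ![v 0, v 1] := by
        funext i; fin_cases i <;> rfl
      obtain ⟨a, b, c, h0⟩ := (memtriple _ _ _ _).mp (hv 0)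
      obtain ⟨d, e, f, h1⟩ := (memtriple _ _ _ _).mp (hv 1)
      refine ⟨(a*e - b*d) • φ^2 + (2*(a*f - c*d)) • (φ*ψ) + (b*f - c*e) • ψ^2,
        (memtriple _ _ _ _).mpr ⟨_, _, _, rfl⟩, ?_⟩
      show wronskian 2 ![φ, ψ] * _ = wronskian 2 v
      rw [show wronskian 2 v = wronskian 2 ![v 0, v 1] by rw [← hv'], h0, h1, keyid]
    · rintro ⟨x, hx, rfl⟩
      obtain ⟨p, q, r, rfl⟩ := (memtriple _ _ _ _).mp hx
      by_cases hp : p = 0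
      · refine ⟨![(0:ℂ) • φ^2 + (0:ℂ) • (φ*ψ) + (1:ℂ) • ψ^2,
          (-(q/2)) • φ^2 + (-r) • (φ*ψ) + (0:ℂ) • ψ^2], ?_, ?_⟩
        · intro i; fin_cases i <;> exact (memtriple _ _ _ _).mpr ⟨_, _, _, rfl⟩
        · show wronskian 2 ![φ, ψ] * _ = wronskian 2 ![_, _]
          rw [keyid]
          subst hp
          rw [show ((0:ℂ)*(-r) - 0*(-(q/2))) = 0 by ring,
            show (2*((0:ℂ)*0 - 1*(-(q/2)))) = q by ring,
            show ((0:ℂ)*0 - 1*(-r)) = r by ring]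
      · refine ⟨![(1:ℂ) • φ^2 + (0:ℂ) • (φ*ψ) + (-(r/p)) • ψ^2,
          (0:ℂ) • φ^2 + p • (φ*ψ) + (q/2) • ψ^2], ?_, ?_⟩
        · intro i; fin_cases i <;> exact (memtriple _ _ _ _).mpr ⟨_, _, _, rfl⟩
        · show wronskian 2 ![φ, ψ] * _ = wronskian 2 ![_, _]
          rw [keyid]
          have hr : (0:ℂ)*(q/2) - (-(r/p))*p = r := by field_simp; ring
          rw [hr, show ((1:ℂ)*p - 0*0) = p by ring,
            show (2*((1:ℂ)*(q/2) - (-(r/p))*0)) = q by ring]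
  exact ⟨hrank, hdual, ⟨wronskian 2 ![φ, ψ], hdual⟩⟩
end

section
/- Let N ≤ d, let z_1, …, z_n be distinct points of ℂ ∪ {∞}, and let ξ^{(1)}, …, ξ^{(n)} be partitions with at most N parts, each with ξ^{(s)}_1 ≤ d−N, such that ∑_{s=1}^n |ξ^{(s)}| = N(d−N). If there exists a self-dual space X in the intersection ⋂_{s=1}^n Ω_{ξ^{(s)}}(F(z_s)) ⊆ Gr(N,d), then for every s = 1, …, n and every i = 1, …, N−1 one has ξ^{(s)}_i − ξ^{(s)}_{i+1} = ξ^{(s)}_{N−i} − ξ^{(s)}_{N−i+1}. -/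
open Module Polynomial

/-- `X` lies in the Schubert cell `Ω_ξ(F)` for the complete flag `F` (indexed so that
`F k` has dimension `k`), where `ξ = (ξ 1 ≥ ⋯ ≥ ξ N)` is a partition (1-indexed). -/
def InSchubertCell (N d : ℕ) (ξ : ℕ → ℕ) (F : ℕ → Submodule ℂ (Polynomial ℂ))
    (X : Submodule ℂ (Polynomial ℂ)) : Prop :=
  ∀ j < N, finrank ℂ ↥(X ⊓ F (d - j - ξ (N - j))) = N - j ∧
    finrank ℂ ↥(X ⊓ F (d - j - ξ (N - j) - 1)) = N - j - 1

/-- The osculating flag at `z ∈ ℂ`: `F(z)_k = {f ∈ ℂ_d[x] : (x - z)^(d - k) ∣ f}`. -/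
noncomputable def oscFlag (d : ℕ) (z : ℂ) (k : ℕ) : Submodule ℂ (Polynomial ℂ) :=
  Polynomial.degreeLT ℂ d ⊓
    (Ideal.span {(Polynomial.X - Polynomial.C z) ^ (d - k)}).restrictScalars ℂ

/-- The osculating flag at a point of `ℙ¹ = ℂ ∪ {∞}`: at `∞` it is `F(∞)_k = ℂ_k[x]`,
and at `z ∈ ℂ` it is `F(z)`. -/
noncomputable def oscFlagP (d : ℕ) (z : OnePoint ℂ) (k : ℕ) : Submodule ℂ (Polynomial ℂ) :=
  Option.casesOn (z : Option ℂ) (Polynomial.degreeLT ℂ k) (fun w => oscFlag d w k)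

namespace Stmt12Aux

open Polynomial Module

/-- The constant `C(m,2) = 0 + 1 + ⋯ + (m-1)`. -/
def c2 (m : ℕ) : ℕ := ∑ i : Fin m, (i : ℕ)

/-! ### The Wronskian as a multilinear map -/

/-- The Wronskian as a `ℂ`-multilinear map. -/
noncomputable def wrM (m : ℕ) : MultilinearMap ℂ (fun _ : Fin m => Polynomial ℂ) (Polynomial ℂ) :=
  ((Matrix.detRowAlternating :
      (Fin m → Polynomial ℂ) [⋀^Fin m]→ₗ[Polynomial ℂ] Polynomial ℂ).toMultilinearMap.restrictScalars
      ℂ).compLinearMap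
    (fun _ : Fin m => LinearMap.pi
      (fun i : Fin m => (Polynomial.derivative : Polynomial ℂ →ₗ[ℂ] Polynomial ℂ) ^ (i : ℕ)))

lemma det_of_eq_wronskian (m : ℕ) (g : Fin m → Polynomial ℂ) :
    Matrix.det (Matrix.of fun j i : Fin m => (⇑(Polynomial.derivative (R := ℂ)))^[(i : ℕ)] (g j))
      = _root_.wronskian m g := by
  rw [← Matrix.det_transpose, _root_.wronskian]
  congr 1

lemma wrM_apply (m : ℕ) (f : Fin m → Polynomial ℂ) : wrM m f = _root_.wronskian m f := by
  have h1 : wrM m f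
      = Matrix.det (Matrix.of fun j i : Fin m =>
          ((Polynomial.derivative : Polynomial ℂ →ₗ[ℂ] Polynomial ℂ) ^ (i : ℕ)) (f j)) := rfl
  rw [h1, ← det_of_eq_wronskian]
  congr 1
  ext j i
  simp [Module.End.pow_apply]

lemma wronskian_perm (m : ℕ) (f : Fin m → Polynomial ℂ) (σ : Equiv.Perm (Fin m)) :
    _root_.wronskian m (f ∘ σ) = Equiv.Perm.sign σ • _root_.wronskian m f := by
  classical
  have h := (Matrix.detRowAlternating :
      (Fin m → Polynomial ℂ) [⋀^Fin m]→ₗ[Polynomial ℂ] Polynomial ℂ).map_perm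
      (fun j i : Fin m => (⇑(Polynomial.derivative (R := ℂ)))^[(i : ℕ)] (f j)) σ
  have e1 : ∀ (g : Fin m → Polynomial ℂ),
      (Matrix.detRowAlternating (fun j i : Fin m =>
        (⇑(Polynomial.derivative (R := ℂ)))^[(i : ℕ)] (g j))) = _root_.wronskian m g := by
    intro g
    rw [← det_of_eq_wronskian]
    rfl
  have e2 : (fun j i : Fin m => (⇑(Polynomial.derivative (R := ℂ)))^[(i : ℕ)] (f j)) ∘ σ
      = fun j i : Fin m => (⇑(Polynomial.derivative (R := ℂ)))^[(i : ℕ)] ((f ∘ σ) j) := rfl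
  rw [e2, e1 (f ∘ σ), e1 f] at h
  exact h

lemma wronskian_not_injective (m : ℕ) (f : Fin m → Polynomial ℂ)
    (hf : ¬ Function.Injective f) : _root_.wronskian m f = 0 := by
  classical
  have h := (Matrix.detRowAlternating :
      (Fin m → Polynomial ℂ) [⋀^Fin m]→ₗ[Polynomial ℂ] Polynomial ℂ).map_eq_zero_of_not_injective
      (fun j i : Fin m => (⇑(Polynomial.derivative (R := ℂ)))^[(i : ℕ)] (f j)) ?_
  · rw [← det_of_eq_wronskian]
    exact h
  · intro hinj
    apply hf
    intro a b hab
    have : (fun i : Fin m => (⇑(Polynomial.derivative (R := ℂ)))^[(i : ℕ)] (f a))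
        = fun i : Fin m => (⇑(Polynomial.derivative (R := ℂ)))^[(i : ℕ)] (f b) := by
      ext i; rw [hab]
    exact hinj this

/-! ### Trailing degree helpers -/

lemma le_trailingDegree_of_coeff (p : Polynomial ℂ) (b : ℕ∞)
    (h : ∀ n : ℕ, (n : ℕ∞) < b → p.coeff n = 0) : b ≤ p.trailingDegree := by
  rw [Polynomial.trailingDegree]
  exact Finset.le_min fun n hn =>
    le_of_not_gt fun hlt => (Polynomial.mem_support_iff.mp hn) (h n hlt)

lemma trailingDegree_le_of_coeff (p : Polynomial ℂ) (n : ℕ) (h : p.coeff n ≠ 0) :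
    p.trailingDegree ≤ n :=
  Finset.min_le (Polynomial.mem_support_iff.mpr h)

lemma trailingDegree_le_derivative_add_one (p : Polynomial ℂ) :
    p.trailingDegree ≤ (derivative p).trailingDegree + 1 := by
  by_cases hd : derivative p = 0
  · rcases eq_or_ne p 0 with rfl | hp
    · simp
    · have h0 : p.natDegree = 0 := Polynomial.natDegree_eq_zero_of_derivative_eq_zero hd
      obtain ⟨a, rfl⟩ := Polynomial.natDegree_eq_zero.mp h0
      have ha : a ≠ 0 := fun h => hp (by simp [h])
      have : (Polynomial.C a).trailingDegree = 0 := by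
        simpa using Polynomial.trailingDegree_monomial (n := 0) ha
      simp [this]
  · have hn : (derivative p).trailingDegree = ((derivative p).natTrailingDegree : ℕ∞) :=
      Polynomial.trailingDegree_eq_natTrailingDegree hd
    set n := (derivative p).natTrailingDegree with hn'
    have hco : (derivative p).coeff n ≠ 0 := by
      rw [hn']
      exact Polynomial.trailingCoeff_nonzero_iff_nonzero.mpr hd
    have hco2 : p.coeff (n + 1) ≠ 0 := by
      intro h
      apply hco
      rw [Polynomial.coeff_derivative, h, zero_mul]
    calc p.trailingDegree ≤ ((n + 1 : ℕ) : ℕ∞) := trailingDegree_le_of_coeff _ _ hco2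
    _ = (derivative p).trailingDegree + 1 := by rw [hn]; push_cast; ring

lemma trailingDegree_le_iterate (p : Polynomial ℂ) (k : ℕ) :
    p.trailingDegree ≤ (derivative^[k] p).trailingDegree + k := by
  induction k with
  | zero => simp
  | succ k ih =>
    calc p.trailingDegree ≤ (derivative^[k] p).trailingDegree + k := ih
    _ ≤ ((derivative (derivative^[k] p)).trailingDegree + 1) + k := by
        gcongr
        exact trailingDegree_le_derivative_add_one _
    _ = (derivative^[k + 1] p).trailingDegree + (k + 1 : ℕ) := by
        rw [Function.iterate_succ_apply']
        push_cast
        ring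

lemma trailingDegree_prod (s : Finset (Fin m)) (f : Fin m → Polynomial ℂ) :
    (∏ i ∈ s, f i).trailingDegree = ∑ i ∈ s, (f i).trailingDegree := by
  classical
  induction s using Finset.induction with
  | empty => simp
  | insert x s hx ih =>
    rw [Finset.prod_insert hx, Finset.sum_insert hx, Polynomial.trailingDegree_mul, ih]

lemma intunits_smul_eq (u : ℤˣ) (p : Polynomial ℂ) : u • p = p ∨ u • p = -p := by
  rcases Int.units_eq_one_or u with rfl | rfl
  · left; simp
  · right
    rw [Units.smul_def]
    push_cast
    simp

/-- Coefficient-vanishing form of the lower bound on the trailing degree of a Wronskian. -/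
lemma coeff_wronskian_eq_zero_of_lt (m : ℕ) (φ : Fin m → Polynomial ℂ) (n : ℕ)
    (h : ((n + c2 m : ℕ) : ℕ∞) < ∑ i : Fin m, (φ i).trailingDegree) :
    (_root_.wronskian m φ).coeff n = 0 := by
  classical
  rw [_root_.wronskian, Matrix.det_apply]
  rw [Polynomial.finset_sum_coeff]
  refine Finset.sum_eq_zero fun σ _ => ?_
  have key : (∏ i : Fin m, (Matrix.of fun i j : Fin m =>
      (fun p : Polynomial ℂ => derivative p)^[(i : ℕ)] (φ j)) (σ i) i).coeff n = 0 := by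
    apply Polynomial.coeff_eq_zero_of_lt_trailingDegree
    by_contra hle
    push_neg at hle
    have hprod : (∏ i : Fin m, (Matrix.of fun i j : Fin m =>
        (fun p : Polynomial ℂ => derivative p)^[(i : ℕ)] (φ j)) (σ i) i).trailingDegree
        = ∑ i : Fin m, (derivative^[((σ i : Fin m) : ℕ)] (φ i)).trailingDegree := by
      rw [trailingDegree_prod]
      rfl
    have hchain : ∑ i : Fin m, (φ i).trailingDegree
        ≤ ((n + c2 m : ℕ) : ℕ∞) := by
      calc ∑ i : Fin m, (φ i).trailingDegree
          ≤ ∑ i : Fin m, ((derivative^[((σ i : Fin m) : ℕ)] (φ i)).trailingDegree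
              + (((σ i : Fin m) : ℕ) : ℕ∞)) := by
            refine Finset.sum_le_sum fun i _ => ?_
            exact trailingDegree_le_iterate _ _
        _ = (∑ i : Fin m, (derivative^[((σ i : Fin m) : ℕ)] (φ i)).trailingDegree)
              + ∑ i : Fin m, (((σ i : Fin m) : ℕ) : ℕ∞) := by
            rw [Finset.sum_add_distrib]
        _ ≤ ((n : ℕ∞) + ((c2 m : ℕ) : ℕ∞)) := by
            have hsum : ∑ i : Fin m, (((σ i : Fin m) : ℕ) : ℕ∞) = ((c2 m : ℕ) : ℕ∞) := by
              rw [c2, Nat.cast_sum]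
              exact Equiv.sum_comp σ (fun i : Fin m => ((i : ℕ) : ℕ∞))
            rw [hsum, ← hprod]
            gcongr
        _ = ((n + c2 m : ℕ) : ℕ∞) := by push_cast; ring
    exact absurd h (not_lt.mpr hchain)
  rcases intunits_smul_eq (Equiv.Perm.sign σ) (∏ i : Fin m, (Matrix.of fun i j : Fin m =>
      (fun p : Polynomial ℂ => derivative p)^[(i : ℕ)] (φ j)) (σ i) i) with he | he <;>
    rw [he] <;> first
      | exact key
      | (simp only [Polynomial.coeff_neg, neg_eq_zero]; exact key)

/-! ### The Wronskian of powers of `X` -/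

/-- Vandermonde-type constant. -/
noncomputable def vdm (m : ℕ) (k : Fin m → ℕ) : ℂ :=
  (Matrix.vandermonde fun j : Fin m => ((k j : ℕ) : ℂ)).det

lemma vdm_ne_zero (m : ℕ) (k : Fin m → ℕ) (hk : Function.Injective k) : vdm m k ≠ 0 := by
  rw [vdm, Matrix.det_vandermonde_ne_zero_iff]
  intro a b hab
  exact hk (Nat.cast_injective hab)

lemma X_pow_mul_wronskian_X_pow (m : ℕ) (k : Fin m → ℕ) :
    X ^ (c2 m) * _root_.wronskian m (fun j => X ^ (k j))
      = Polynomial.C (vdm m k) * X ^ (∑ j : Fin m, k j) := by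
  classical
  have h1 : (X : Polynomial ℂ) ^ (c2 m) = ∏ i : Fin m, X ^ (i : ℕ) := by
    rw [c2, ← Finset.prod_pow_eq_pow_sum]
  have h2 : X ^ (c2 m) * _root_.wronskian m (fun j => X ^ (k j))
      = Matrix.det (Matrix.of fun i j : Fin m =>
          ((k j).descFactorial (i : ℕ) : Polynomial ℂ) * X ^ (k j)) := by
    rw [h1, _root_.wronskian]
    rw [← Matrix.det_mul_column (fun i : Fin m => (X : Polynomial ℂ) ^ (i : ℕ))]
    congr 1
    ext i j
    simp only [Matrix.of_apply]
    rw [Polynomial.iterate_derivative_X_pow_eq_natCast_mul]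
    rcases le_or_gt (i : ℕ) (k j) with hik | hik
    · have hexp : (i : ℕ) + (k j - (i : ℕ)) = k j := by omega
      rw [mul_left_comm, ← pow_add, hexp]
    · have : (k j).descFactorial (i : ℕ) = 0 := Nat.descFactorial_eq_zero_iff_lt.mpr hik
      simp [this]
  have h3 : Matrix.det (Matrix.of fun i j : Fin m =>
        ((k j).descFactorial (i : ℕ) : Polynomial ℂ) * X ^ (k j))
      = (∏ j : Fin m, (X : Polynomial ℂ) ^ (k j)) * Matrix.det (Matrix.of fun i j : Fin m =>
          ((k j).descFactorial (i : ℕ) : Polynomial ℂ)) := by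
    rw [← Matrix.det_mul_row (fun j : Fin m => (X : Polynomial ℂ) ^ (k j))]
    congr 1
    ext i j
    simp [mul_comm]
  have hdet : Matrix.det (Matrix.of fun i j : Fin m => (((k j).descFactorial (i : ℕ) : ℂ)))
      = vdm m k := by
    have hmap : (Matrix.of fun i j : Fin m => (((k j).descFactorial (i : ℕ) : ℂ)))
        = Matrix.of fun i j : Fin m =>
            ((descPochhammer ℂ (i : ℕ)).eval ((k j : ℕ) : ℂ)) := by
      ext i j
      simp only [Matrix.of_apply]
      rw [descPochhammer_eval_eq_descFactorial]
    rw [hmap, vdm]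
    rw [← Matrix.det_transpose]
    rw [Matrix.det_eval_matrixOfPolynomials_eq_det_vandermonde
      (fun j : Fin m => ((k j : ℕ) : ℂ)) (fun i : Fin m => descPochhammer ℂ (i : ℕ))
      (fun i => descPochhammer_natDegree ℂ (i : ℕ)) (fun i => monic_descPochhammer ℂ (i : ℕ))]
    congr 1
  have h4 : Matrix.det (Matrix.of fun i j : Fin m =>
        ((k j).descFactorial (i : ℕ) : Polynomial ℂ))
      = Polynomial.C (vdm m k) := by
    calc Matrix.det (Matrix.of fun i j : Fin m => ((k j).descFactorial (i : ℕ) : Polynomial ℂ))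
        = Matrix.det ((Polynomial.C : ℂ →+* Polynomial ℂ).mapMatrix
            (Matrix.of fun i j : Fin m => (((k j).descFactorial (i : ℕ) : ℂ)))) := by
          congr 1
          try
            ext i j
            simp [RingHom.mapMatrix_apply, Matrix.map_apply, Polynomial.C_eq_natCast]
      _ = Polynomial.C (Matrix.det (Matrix.of fun i j : Fin m =>
            (((k j).descFactorial (i : ℕ) : ℂ)))) := (RingHom.map_det _ _).symm
      _ = Polynomial.C (vdm m k) := by rw [hdet]
  rw [h2, h3, h4, mul_comm]
  congr 1
  rw [Finset.prod_pow_eq_pow_sum]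

lemma strictMono_fin_le {m : ℕ} (t : Fin m → ℕ) (h : StrictMono t) (i : Fin m) :
    (i : ℕ) ≤ t i := by
  suffices H : ∀ v (hv : v < m), v ≤ t ⟨v, hv⟩ by
    have := H i.1 i.2
    simpa using this
  intro v
  induction v with
  | zero => intro hv; exact Nat.zero_le _
  | succ v ih =>
    intro hv
    have hv' : v < m := by omega
    have h1 : t ⟨v, hv'⟩ < t ⟨v + 1, hv⟩ := h (by simp [Fin.lt_def])
    have h2 := ih hv'
    omega

lemma c2_le_sum_of_strictMono {m : ℕ} (t : Fin m → ℕ) (h : StrictMono t) :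
    c2 m ≤ ∑ i : Fin m, t i := by
  rw [c2]
  exact Finset.sum_le_sum fun i _ => strictMono_fin_le t h i

lemma coeff_wronskian_X_pow (m : ℕ) (k : Fin m → ℕ) (hc2 : c2 m ≤ ∑ j : Fin m, k j) :
    (_root_.wronskian m (fun j => X ^ (k j))).coeff (∑ j : Fin m, k j - c2 m) = vdm m k := by
  have := X_pow_mul_wronskian_X_pow m k
  have hco := congrArg (fun p => Polynomial.coeff p (∑ j : Fin m, k j)) this
  rw [show (∑ j : Fin m, k j) = (∑ j : Fin m, k j - c2 m) + c2 m by omega] at hco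
  rw [Polynomial.coeff_X_pow_mul] at hco
  rw [hco, Polynomial.coeff_C_mul, Polynomial.coeff_X_pow]
  simp

/-! ### Exact trailing degree of a Wronskian -/

lemma trailingDegree_wronskian_eq (m : ℕ) (φ : Fin m → Polynomial ℂ) (t : Fin m → ℕ)
    (hmono : StrictMono t) (ht : ∀ i, (φ i).trailingDegree = (t i : ℕ∞)) :
    (_root_.wronskian m φ).trailingDegree = ((∑ i : Fin m, t i - c2 m : ℕ) : ℕ∞) := by
  classical
  have hc2 : c2 m ≤ ∑ i : Fin m, t i := c2_le_sum_of_strictMono t hmono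
  set E : ℕ := ∑ i : Fin m, t i - c2 m with hE
  have hφne : ∀ i, φ i ≠ 0 := by
    intro i h
    have := ht i
    rw [h, Polynomial.trailingDegree_zero] at this
    exact (by simp : (⊤ : ℕ∞) ≠ (t i : ℕ∞)) this
  -- decomposition
  set a : Fin m → Polynomial ℂ := fun i => (φ i).trailingCoeff • X ^ (t i) with ha
  set r : Fin m → Polynomial ℂ := fun i => φ i - a i with hr
  have hta : ∀ i, (a i).trailingDegree = (t i : ℕ∞) := by
    intro i
    have htc : (φ i).trailingCoeff ≠ 0 := Polynomial.trailingCoeff_nonzero_iff_nonzero.mpr (hφne i)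
    rw [ha]
    simp only [Polynomial.smul_eq_C_mul]
    exact Polynomial.trailingDegree_C_mul_X_pow _ htc
  have hnt : ∀ i, (φ i).natTrailingDegree = t i := by
    intro i
    have := ht i
    rw [Polynomial.trailingDegree_eq_natTrailingDegree (hφne i)] at this
    exact_mod_cast this
  have htr : ∀ i, ((t i : ℕ∞) + 1) ≤ (r i).trailingDegree := by
    intro i
    apply le_trailingDegree_of_coeff
    intro n hn
    have hn' : n ≤ t i := by
      rcases le_or_gt n (t i) with h | h
      · exact h
      · exfalso
        have : ((t i : ℕ∞) + 1) ≤ (n : ℕ∞) := by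
          have : (t i) + 1 ≤ n := h
          exact_mod_cast this
        exact absurd hn (not_lt.mpr this)
    rw [hr]
    simp only [Polynomial.coeff_sub, ha, Polynomial.coeff_smul, Polynomial.coeff_X_pow]
    rcases eq_or_lt_of_le hn' with h | h
    · subst h
      rw [if_pos rfl]
      simp only [smul_eq_mul, mul_one]
      rw [sub_eq_zero]
      rw [Polynomial.trailingCoeff, hnt i]
    · rw [if_neg (by omega)]
      have hco : (φ i).coeff n = 0 := by
        apply Polynomial.coeff_eq_zero_of_lt_trailingDegree
        rw [ht i]
        exact_mod_cast h
      rw [hco]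
      simp
  have hφar : φ = fun i => a i + r i := by
    funext i
    rw [hr]
    ring
  -- the main coefficient
  have hmain : (_root_.wronskian m φ).coeff E
      = (∏ i : Fin m, (φ i).trailingCoeff) * vdm m t := by
    have hW : _root_.wronskian m φ = ∑ s : Finset (Fin m), wrM m (s.piecewise a r) := by
      rw [← wrM_apply, hφar]
      exact (wrM m).map_add_univ a r
    rw [hW, Polynomial.finset_sum_coeff]
    have hterm : ∀ s : Finset (Fin m), s ≠ Finset.univ →
        (wrM m (s.piecewise a r)).coeff E = 0 := by
      intro s hs
      obtain ⟨i0, hi0⟩ : ∃ i0, i0 ∉ s := by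
        by_contra h
        push_neg at h
        exact hs (Finset.eq_univ_iff_forall.mpr h)
      rw [wrM_apply]
      apply coeff_wronskian_eq_zero_of_lt
      have hlow : ∀ i : Fin m, (t i : ℕ∞) ≤ (s.piecewise a r i).trailingDegree := by
        intro i
        by_cases hi : i ∈ s
        · rw [Finset.piecewise_eq_of_mem _ _ _ hi, hta i]
        · rw [Finset.piecewise_eq_of_notMem _ _ _ hi]
          calc (t i : ℕ∞) ≤ (t i : ℕ∞) + 1 := le_self_add
          _ ≤ _ := htr i
      have hstrict : ((∑ i : Fin m, t i : ℕ) : ℕ∞) + 1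
          ≤ ∑ i : Fin m, (s.piecewise a r i).trailingDegree := by
        have : ∑ i : Fin m, (s.piecewise a r i).trailingDegree
            = (s.piecewise a r i0).trailingDegree
              + ∑ i ∈ Finset.univ.erase i0, (s.piecewise a r i).trailingDegree := by
          rw [← Finset.add_sum_erase _ _ (Finset.mem_univ i0)]
        rw [this]
        have h1 : ((t i0 : ℕ∞) + 1) ≤ (s.piecewise a r i0).trailingDegree := by
          rw [Finset.piecewise_eq_of_notMem _ _ _ hi0]
          exact htr i0
        have h2 : ((∑ i ∈ Finset.univ.erase i0, t i : ℕ) : ℕ∞)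
            ≤ ∑ i ∈ Finset.univ.erase i0, (s.piecewise a r i).trailingDegree := by
          rw [Nat.cast_sum]
          exact Finset.sum_le_sum fun i _ => hlow i
        calc ((∑ i : Fin m, t i : ℕ) : ℕ∞) + 1
            = ((t i0 : ℕ∞) + 1) + ((∑ i ∈ Finset.univ.erase i0, t i : ℕ) : ℕ∞) := by
              rw [← Finset.add_sum_erase _ _ (Finset.mem_univ i0)]
              push_cast
              ring
          _ ≤ _ := by gcongr
      calc ((E + c2 m : ℕ) : ℕ∞) < ((∑ i : Fin m, t i : ℕ) : ℕ∞) + 1 := by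
            rw [show E + c2 m = ∑ i : Fin m, t i by omega]
            exact (ENat.lt_add_one_iff (ENat.coe_ne_top _)).mpr le_rfl
        _ ≤ _ := hstrict
    rw [Finset.sum_eq_single Finset.univ]
    · rw [Finset.piecewise_univ]
      have : wrM m a = (∏ i : Fin m, (φ i).trailingCoeff) • wrM m (fun i => X ^ (t i)) := by
        rw [ha]
        exact (wrM m).map_smul_univ (fun i => (φ i).trailingCoeff) (fun i => X ^ (t i))
      rw [this, wrM_apply, Polynomial.coeff_smul, coeff_wronskian_X_pow m t hc2]
      simp [smul_eq_mul]
    · intro s _ hs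
      exact hterm s hs
    · intro h
      exact absurd (Finset.mem_univ _) h
  have hmainne : (_root_.wronskian m φ).coeff E ≠ 0 := by
    rw [hmain]
    apply mul_ne_zero
    · exact Finset.prod_ne_zero_iff.mpr fun i _ =>
        Polynomial.trailingCoeff_nonzero_iff_nonzero.mpr (hφne i)
    · exact vdm_ne_zero m t hmono.injective
  -- conclude
  have hub : (_root_.wronskian m φ).trailingDegree ≤ (E : ℕ∞) := trailingDegree_le_of_coeff _ _ hmainne
  have hlb : (E : ℕ∞) ≤ (_root_.wronskian m φ).trailingDegree := by
    apply le_trailingDegree_of_coeff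
    intro n hn
    apply coeff_wronskian_eq_zero_of_lt
    have hnE : n < E := by exact_mod_cast hn
    have : ∑ i : Fin m, (φ i).trailingDegree = ((∑ i : Fin m, t i : ℕ) : ℕ∞) := by
      rw [Nat.cast_sum]
      exact Finset.sum_congr rfl fun i _ => ht i
    rw [this]
    have : n + c2 m < ∑ i : Fin m, t i := by omega
    exact_mod_cast this
  exact le_antisymm hub hlb

/-! ### Degree versions -/

lemma degree_derivative_add_one_le (p : Polynomial ℂ) :
    (derivative p).degree + 1 ≤ p.degree := by
  by_cases hd : derivative p = 0
  · simp [hd]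
  · have hp : p ≠ 0 := by
      intro h; apply hd; rw [h]; simp
    have hnd : p.natDegree ≠ 0 := by
      intro h
      obtain ⟨c, rfl⟩ := Polynomial.natDegree_eq_zero.mp h
      simp at hd
    have h1 : (derivative p).natDegree < p.natDegree := Polynomial.natDegree_derivative_lt hnd
    rw [Polynomial.degree_eq_natDegree hd, Polynomial.degree_eq_natDegree hp]
    exact_mod_cast Nat.succ_le_of_lt h1

lemma degree_iterate_add_le (p : Polynomial ℂ) (k : ℕ) :
    (derivative^[k] p).degree + k ≤ p.degree := by
  induction k with
  | zero => simp
  | succ k ih =>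
    calc (derivative^[k+1] p).degree + (k + 1 : ℕ)
        = ((derivative (derivative^[k] p)).degree + 1) + (k : ℕ) := by
          rw [Function.iterate_succ_apply']
          push_cast
          ring
      _ ≤ (derivative^[k] p).degree + (k : ℕ) := by
          gcongr
          exact degree_derivative_add_one_le _
      _ ≤ p.degree := ih

/-- Coefficient-vanishing form of the upper bound on the degree of a Wronskian. -/
lemma coeff_wronskian_eq_zero_of_gt (m : ℕ) (φ : Fin m → Polynomial ℂ) (n : ℕ)
    (h : ∑ i : Fin m, (φ i).degree < ((n + c2 m : ℕ) : WithBot ℕ)) :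
    (_root_.wronskian m φ).coeff n = 0 := by
  classical
  rw [_root_.wronskian, Matrix.det_apply]
  rw [Polynomial.finset_sum_coeff]
  refine Finset.sum_eq_zero fun σ _ => ?_
  have key : (∏ i : Fin m, (Matrix.of fun i j : Fin m =>
      (fun p : Polynomial ℂ => derivative p)^[(i : ℕ)] (φ j)) (σ i) i).coeff n = 0 := by
    apply Polynomial.coeff_eq_zero_of_degree_lt
    have hprod : (∏ i : Fin m, (Matrix.of fun i j : Fin m =>
        (fun p : Polynomial ℂ => derivative p)^[(i : ℕ)] (φ j)) (σ i) i).degree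
        = ∑ i : Fin m, (derivative^[((σ i : Fin m) : ℕ)] (φ i)).degree := by
      rw [Polynomial.degree_prod]
      rfl
    have hchain : (∏ i : Fin m, (Matrix.of fun i j : Fin m =>
        (fun p : Polynomial ℂ => derivative p)^[(i : ℕ)] (φ j)) (σ i) i).degree
          + ((c2 m : ℕ) : WithBot ℕ)
        ≤ ∑ i : Fin m, (φ i).degree := by
      rw [hprod]
      have hsum : ∑ i : Fin m, (((σ i : Fin m) : ℕ) : WithBot ℕ) = ((c2 m : ℕ) : WithBot ℕ) := by
        rw [c2, Nat.cast_sum]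
        exact Equiv.sum_comp σ (fun i : Fin m => ((i : ℕ) : WithBot ℕ))
      calc (∑ i : Fin m, (derivative^[((σ i : Fin m) : ℕ)] (φ i)).degree)
            + ((c2 m : ℕ) : WithBot ℕ)
          = ∑ i : Fin m, ((derivative^[((σ i : Fin m) : ℕ)] (φ i)).degree
              + (((σ i : Fin m) : ℕ) : WithBot ℕ)) := by
            rw [Finset.sum_add_distrib, hsum]
        _ ≤ ∑ i : Fin m, (φ i).degree := by
            refine Finset.sum_le_sum fun i _ => ?_
            exact degree_iterate_add_le _ _
    by_contra hle
    push_neg at hle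
    have : ((n + c2 m : ℕ) : WithBot ℕ) ≤ ∑ i : Fin m, (φ i).degree := by
      calc ((n + c2 m : ℕ) : WithBot ℕ) = (n : WithBot ℕ) + ((c2 m : ℕ) : WithBot ℕ) := by
            push_cast; ring
        _ ≤ _ + ((c2 m : ℕ) : WithBot ℕ) := by gcongr
        _ ≤ _ := hchain
    exact absurd h (not_lt.mpr this)
  rcases intunits_smul_eq (Equiv.Perm.sign σ) (∏ i : Fin m, (Matrix.of fun i j : Fin m =>
      (fun p : Polynomial ℂ => derivative p)^[(i : ℕ)] (φ j)) (σ i) i) with he | he <;>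
    rw [he] <;> first
      | exact key
      | (simp only [Polynomial.coeff_neg, neg_eq_zero]; exact key)

lemma degree_wronskian_eq (m : ℕ) (φ : Fin m → Polynomial ℂ) (t : Fin m → ℕ)
    (hanti : StrictAnti t) (ht : ∀ i, (φ i).degree = (t i : WithBot ℕ)) :
    (_root_.wronskian m φ).degree = ((∑ i : Fin m, t i - c2 m : ℕ) : WithBot ℕ) := by
  classical
  have hc2 : c2 m ≤ ∑ i : Fin m, t i := by
    have hmono : StrictMono (t ∘ Fin.rev) := by
      intro i j hij
      exact hanti (Fin.rev_lt_rev.mpr hij)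
    have := c2_le_sum_of_strictMono (t ∘ Fin.rev) hmono
    calc c2 m ≤ ∑ i : Fin m, t (Fin.rev i) := this
    _ = ∑ i : Fin m, t i := Fintype.sum_equiv (Equiv.ofBijective Fin.rev Fin.rev_bijective) _ _
        (fun i => rfl)
  set E : ℕ := ∑ i : Fin m, t i - c2 m with hE
  have hφne : ∀ i, φ i ≠ 0 := by
    intro i h
    have := ht i
    rw [h, Polynomial.degree_zero] at this
    exact (by simp : (⊥ : WithBot ℕ) ≠ ((t i : ℕ) : WithBot ℕ)) this
  set a : Fin m → Polynomial ℂ := fun i => (φ i).leadingCoeff • X ^ (t i) with ha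
  set r : Fin m → Polynomial ℂ := fun i => φ i - a i with hr
  have hnd : ∀ i, (φ i).natDegree = t i := by
    intro i
    have := ht i
    rw [Polynomial.degree_eq_natDegree (hφne i)] at this
    exact_mod_cast this
  have hta : ∀ i, (a i).degree = (t i : WithBot ℕ) := by
    intro i
    have hlc : (φ i).leadingCoeff ≠ 0 := Polynomial.leadingCoeff_ne_zero.mpr (hφne i)
    rw [ha]
    simp only [Polynomial.smul_eq_C_mul]
    rw [Polynomial.degree_C_mul_X_pow _ hlc]
  have hdr : ∀ i, (r i).degree < (t i : WithBot ℕ) := by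
    intro i
    rw [Polynomial.degree_lt_iff_coeff_zero]
    intro n hn
    have hn' : t i ≤ n := by exact_mod_cast hn
    rw [hr]
    simp only [Polynomial.coeff_sub, ha, Polynomial.coeff_smul, Polynomial.coeff_X_pow]
    rcases eq_or_lt_of_le hn' with h | h
    · subst h
      rw [if_pos rfl]
      simp only [smul_eq_mul, mul_one]
      rw [sub_eq_zero]
      rw [Polynomial.leadingCoeff, hnd i]
    · rw [if_neg (by omega)]
      have hco : (φ i).coeff n = 0 := by
        apply Polynomial.coeff_eq_zero_of_degree_lt
        rw [ht i]
        exact_mod_cast h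
      rw [hco]
      simp
  have hφar : φ = fun i => a i + r i := by
    funext i
    rw [hr]
    ring
  have hmain : (_root_.wronskian m φ).coeff E
      = (∏ i : Fin m, (φ i).leadingCoeff) * vdm m t := by
    have hW : _root_.wronskian m φ = ∑ s : Finset (Fin m), wrM m (s.piecewise a r) := by
      rw [← wrM_apply, hφar]
      exact (wrM m).map_add_univ a r
    rw [hW, Polynomial.finset_sum_coeff]
    have hterm : ∀ s : Finset (Fin m), s ≠ Finset.univ →
        (wrM m (s.piecewise a r)).coeff E = 0 := by
      intro s hs
      obtain ⟨i0, hi0⟩ : ∃ i0, i0 ∉ s := by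
        by_contra h
        push_neg at h
        exact hs (Finset.eq_univ_iff_forall.mpr h)
      rw [wrM_apply]
      apply coeff_wronskian_eq_zero_of_gt
      have hhigh : ∀ i : Fin m, (s.piecewise a r i).degree ≤ (t i : WithBot ℕ) := by
        intro i
        by_cases hi : i ∈ s
        · rw [Finset.piecewise_eq_of_mem _ _ _ hi, hta i]
        · rw [Finset.piecewise_eq_of_notMem _ _ _ hi]
          exact le_of_lt (hdr i)
      have hsplit : ∑ i : Fin m, (s.piecewise a r i).degree
          = (s.piecewise a r i0).degree
            + ∑ i ∈ Finset.univ.erase i0, (s.piecewise a r i).degree := by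
        rw [← Finset.add_sum_erase _ _ (Finset.mem_univ i0)]
      rw [hsplit]
      have h2 : ∑ i ∈ Finset.univ.erase i0, (s.piecewise a r i).degree
          ≤ ((∑ i ∈ Finset.univ.erase i0, t i : ℕ) : WithBot ℕ) := by
        rw [Nat.cast_sum]
        exact Finset.sum_le_sum fun i _ => hhigh i
      have hpe : (s.piecewise a r i0) = r i0 := Finset.piecewise_eq_of_notMem _ _ _ hi0
      rw [hpe]
      rcases eq_or_ne (r i0) 0 with h0 | h0
      · rw [h0, Polynomial.degree_zero]
        calc (⊥ : WithBot ℕ) + ∑ i ∈ Finset.univ.erase i0, (s.piecewise a r i).degree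
            = ⊥ := by rw [WithBot.bot_add]
          _ < _ := by
            exact WithBot.bot_lt_coe _
      · have hu : (r i0).degree = ((r i0).natDegree : WithBot ℕ) :=
          Polynomial.degree_eq_natDegree h0
        have hu2 : (r i0).natDegree < t i0 := by
          have := hdr i0
          rw [hu] at this
          exact_mod_cast this
        calc (r i0).degree + ∑ i ∈ Finset.univ.erase i0, (s.piecewise a r i).degree
            ≤ ((r i0).natDegree : WithBot ℕ) + ((∑ i ∈ Finset.univ.erase i0, t i : ℕ) : WithBot ℕ) := by
              rw [hu]; gcongr
          _ = (((r i0).natDegree + ∑ i ∈ Finset.univ.erase i0, t i : ℕ) : WithBot ℕ) := by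
              push_cast; ring
          _ < ((E + c2 m : ℕ) : WithBot ℕ) := by
              have hEsum : E + c2 m = ∑ i : Fin m, t i := by omega
              have hsum2 : ∑ i : Fin m, t i = t i0 + ∑ i ∈ Finset.univ.erase i0, t i := by
                rw [← Finset.add_sum_erase _ _ (Finset.mem_univ i0)]
              have : (r i0).natDegree + ∑ i ∈ Finset.univ.erase i0, t i
                  < E + c2 m := by omega
              exact_mod_cast this
    rw [Finset.sum_eq_single Finset.univ]
    · rw [Finset.piecewise_univ]
      have : wrM m a = (∏ i : Fin m, (φ i).leadingCoeff) • wrM m (fun i => X ^ (t i)) := by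
        rw [ha]
        exact (wrM m).map_smul_univ (fun i => (φ i).leadingCoeff) (fun i => X ^ (t i))
      rw [this, wrM_apply, Polynomial.coeff_smul, coeff_wronskian_X_pow m t hc2]
      simp [smul_eq_mul]
    · intro s _ hs
      exact hterm s hs
    · intro h
      exact absurd (Finset.mem_univ _) h
  have hmainne : (_root_.wronskian m φ).coeff E ≠ 0 := by
    rw [hmain]
    apply mul_ne_zero
    · exact Finset.prod_ne_zero_iff.mpr fun i _ =>
        Polynomial.leadingCoeff_ne_zero.mpr (hφne i)
    · exact vdm_ne_zero m t hanti.injective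
  have hlb : ((E : ℕ) : WithBot ℕ) ≤ (_root_.wronskian m φ).degree :=
    Polynomial.le_degree_of_ne_zero hmainne
  have hub : (_root_.wronskian m φ).degree ≤ ((E : ℕ) : WithBot ℕ) := by
    rw [Polynomial.degree_le_iff_coeff_zero]
    intro n hn
    have hn' : E < n := by exact_mod_cast hn
    apply coeff_wronskian_eq_zero_of_gt
    have hdeg : ∑ i : Fin m, (φ i).degree = ((∑ i : Fin m, t i : ℕ) : WithBot ℕ) := by
      rw [Nat.cast_sum]
      exact Finset.sum_congr rfl fun i _ => ht i
    rw [hdeg]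
    have : ∑ i : Fin m, t i < n + c2 m := by omega
    exact_mod_cast this
  exact le_antisymm hub hlb

/-! ### Spans of polynomials with distinct trailing degrees / degrees -/

lemma exists_coeff_ne_tdeg {k : ℕ} (g : Fin k → Polynomial ℂ) (T : Fin k → ℕ)
    (hT : ∀ j, (g j).trailingDegree = (T j : ℕ∞)) (hinj : Function.Injective T)
    (a : Fin k → ℂ) (ha : ∃ j, a j ≠ 0) :
    ∃ j0, a j0 ≠ 0 ∧ (∑ j, a j • g j).coeff (T j0) ≠ 0 ∧
      ∀ n : ℕ, n < T j0 → (∑ j, a j • g j).coeff n = 0 := by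
  classical
  have hgne : ∀ j, g j ≠ 0 := by
    intro j h
    have := hT j
    rw [h, Polynomial.trailingDegree_zero] at this
    exact (by simp : (⊤ : ℕ∞) ≠ (T j : ℕ∞)) this
  set S : Finset (Fin k) := Finset.univ.filter (fun j => a j ≠ 0) with hS
  have hSne : S.Nonempty := by
    obtain ⟨j, hj⟩ := ha
    exact ⟨j, by simp [hS, hj]⟩
  obtain ⟨j0, hj0S, hj0min⟩ := Finset.exists_min_image S T hSne
  have haj0 : a j0 ≠ 0 := by
    have := hj0S
    simp [hS] at this
    exact this
  refine ⟨j0, haj0, ?_, ?_⟩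
  · rw [Polynomial.finset_sum_coeff]
    rw [Finset.sum_eq_single j0]
    · rw [Polynomial.coeff_smul]
      have : (g j0).coeff (T j0) = (g j0).trailingCoeff := by
        rw [Polynomial.trailingCoeff]
        congr 1
        have := hT j0
        rw [Polynomial.trailingDegree_eq_natTrailingDegree (hgne j0)] at this
        exact_mod_cast this.symm
      rw [this]
      simp only [smul_eq_mul]
      exact mul_ne_zero haj0 (Polynomial.trailingCoeff_nonzero_iff_nonzero.mpr (hgne j0))
    · intro j _ hj
      rw [Polynomial.coeff_smul]
      rcases eq_or_ne (a j) 0 with h0 | h0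
      · rw [h0]; simp
      · have hjS : j ∈ S := by simp [hS, h0]
        have hTle : T j0 ≤ T j := hj0min j hjS
        have hTlt : T j0 < T j := lt_of_le_of_ne hTle (fun h => hj (hinj h).symm)
        have : (g j).coeff (T j0) = 0 := by
          apply Polynomial.coeff_eq_zero_of_lt_trailingDegree
          rw [hT j]
          exact_mod_cast hTlt
        rw [this]
        simp
    · intro h
      exact absurd (Finset.mem_univ _) h
  · intro n hn
    rw [Polynomial.finset_sum_coeff]
    refine Finset.sum_eq_zero fun j _ => ?_
    rw [Polynomial.coeff_smul]
    rcases eq_or_ne (a j) 0 with h0 | h0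
    · rw [h0]; simp
    · have hjS : j ∈ S := by simp [hS, h0]
      have hTle : T j0 ≤ T j := hj0min j hjS
      have : (g j).coeff n = 0 := by
        apply Polynomial.coeff_eq_zero_of_lt_trailingDegree
        rw [hT j]
        exact_mod_cast lt_of_lt_of_le hn hTle
      rw [this]
      simp

lemma linearIndependent_of_tdeg {k : ℕ} (g : Fin k → Polynomial ℂ) (T : Fin k → ℕ)
    (hT : ∀ j, (g j).trailingDegree = (T j : ℕ∞)) (hinj : Function.Injective T) :
    LinearIndependent ℂ g := by
  rw [Fintype.linearIndependent_iff]
  intro a hsum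
  by_contra h
  push_neg at h
  obtain ⟨j, hj⟩ := h
  obtain ⟨j0, _, hco, _⟩ := exists_coeff_ne_tdeg g T hT hinj a ⟨j, hj⟩
  rw [hsum] at hco
  simp at hco

lemma tdeg_mem_of_mem_span {k : ℕ} (g : Fin k → Polynomial ℂ) (T : Fin k → ℕ)
    (hT : ∀ j, (g j).trailingDegree = (T j : ℕ∞)) (hinj : Function.Injective T)
    {h : Polynomial ℂ} (hmem : h ∈ Submodule.span ℂ (Set.range g)) (hne : h ≠ 0) :
    ∃ j, h.trailingDegree = (T j : ℕ∞) := by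
  rw [Submodule.mem_span_range_iff_exists_fun] at hmem
  obtain ⟨a, ha⟩ := hmem
  have hex : ∃ j, a j ≠ 0 := by
    by_contra hno
    push_neg at hno
    apply hne
    rw [← ha]
    refine Finset.sum_eq_zero fun j _ => ?_
    rw [hno j]
    simp
  obtain ⟨j0, _, hco, hzero⟩ := exists_coeff_ne_tdeg g T hT hinj a hex
  refine ⟨j0, ?_⟩
  rw [← ha]
  apply le_antisymm
  · exact trailingDegree_le_of_coeff _ _ hco
  · apply le_trailingDegree_of_coeff
    intro n hn
    exact hzero n (by exact_mod_cast hn)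

lemma exists_coeff_ne_deg {k : ℕ} (g : Fin k → Polynomial ℂ) (T : Fin k → ℕ)
    (hT : ∀ j, (g j).degree = (T j : WithBot ℕ)) (hinj : Function.Injective T)
    (a : Fin k → ℂ) (ha : ∃ j, a j ≠ 0) :
    ∃ j0, a j0 ≠ 0 ∧ (∑ j, a j • g j).coeff (T j0) ≠ 0 ∧
      ∀ n : ℕ, T j0 < n → (∑ j, a j • g j).coeff n = 0 := by
  classical
  have hgne : ∀ j, g j ≠ 0 := by
    intro j h
    have := hT j
    rw [h, Polynomial.degree_zero] at this
    exact (by simp : (⊥ : WithBot ℕ) ≠ (T j : WithBot ℕ)) this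
  set S : Finset (Fin k) := Finset.univ.filter (fun j => a j ≠ 0) with hS
  have hSne : S.Nonempty := by
    obtain ⟨j, hj⟩ := ha
    exact ⟨j, by simp [hS, hj]⟩
  obtain ⟨j0, hj0S, hj0max⟩ := Finset.exists_max_image S T hSne
  have haj0 : a j0 ≠ 0 := by
    have := hj0S
    simp [hS] at this
    exact this
  refine ⟨j0, haj0, ?_, ?_⟩
  · rw [Polynomial.finset_sum_coeff]
    rw [Finset.sum_eq_single j0]
    · rw [Polynomial.coeff_smul]
      have : (g j0).coeff (T j0) = (g j0).leadingCoeff := by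
        rw [Polynomial.leadingCoeff]
        congr 1
        have := hT j0
        rw [Polynomial.degree_eq_natDegree (hgne j0)] at this
        exact_mod_cast this.symm
      rw [this]
      simp only [smul_eq_mul]
      exact mul_ne_zero haj0 (Polynomial.leadingCoeff_ne_zero.mpr (hgne j0))
    · intro j _ hj
      rw [Polynomial.coeff_smul]
      rcases eq_or_ne (a j) 0 with h0 | h0
      · rw [h0]; simp
      · have hjS : j ∈ S := by simp [hS, h0]
        have hTle : T j ≤ T j0 := hj0max j hjS
        have hTlt : T j < T j0 := lt_of_le_of_ne hTle (fun h => hj (hinj h))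
        have : (g j).coeff (T j0) = 0 := by
          apply Polynomial.coeff_eq_zero_of_degree_lt
          rw [hT j]
          exact_mod_cast hTlt
        rw [this]
        simp
    · intro h
      exact absurd (Finset.mem_univ _) h
  · intro n hn
    rw [Polynomial.finset_sum_coeff]
    refine Finset.sum_eq_zero fun j _ => ?_
    rw [Polynomial.coeff_smul]
    rcases eq_or_ne (a j) 0 with h0 | h0
    · rw [h0]; simp
    · have hjS : j ∈ S := by simp [hS, h0]
      have hTle : T j ≤ T j0 := hj0max j hjS
      have : (g j).coeff n = 0 := by
        apply Polynomial.coeff_eq_zero_of_degree_lt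
        rw [hT j]
        exact_mod_cast lt_of_le_of_lt hTle hn
      rw [this]
      simp

lemma linearIndependent_of_deg {k : ℕ} (g : Fin k → Polynomial ℂ) (T : Fin k → ℕ)
    (hT : ∀ j, (g j).degree = (T j : WithBot ℕ)) (hinj : Function.Injective T) :
    LinearIndependent ℂ g := by
  rw [Fintype.linearIndependent_iff]
  intro a hsum
  by_contra h
  push_neg at h
  obtain ⟨j, hj⟩ := h
  obtain ⟨j0, _, hco, _⟩ := exists_coeff_ne_deg g T hT hinj a ⟨j, hj⟩
  rw [hsum] at hco
  simp at hco

lemma deg_mem_of_mem_span {k : ℕ} (g : Fin k → Polynomial ℂ) (T : Fin k → ℕ)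
    (hT : ∀ j, (g j).degree = (T j : WithBot ℕ)) (hinj : Function.Injective T)
    {h : Polynomial ℂ} (hmem : h ∈ Submodule.span ℂ (Set.range g)) (hne : h ≠ 0) :
    ∃ j, h.degree = (T j : WithBot ℕ) := by
  rw [Submodule.mem_span_range_iff_exists_fun] at hmem
  obtain ⟨a, ha⟩ := hmem
  have hex : ∃ j, a j ≠ 0 := by
    by_contra hno
    push_neg at hno
    apply hne
    rw [← ha]
    refine Finset.sum_eq_zero fun j _ => ?_
    rw [hno j]
    simp
  obtain ⟨j0, _, hco, hzero⟩ := exists_coeff_ne_deg g T hT hinj a hex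
  refine ⟨j0, ?_⟩
  rw [← ha]
  apply le_antisymm
  · rw [Polynomial.degree_le_iff_coeff_zero]
    intro n hn
    exact hzero n (by exact_mod_cast hn)
  · exact Polynomial.le_degree_of_ne_zero hco

/-! ### Wronskians of tuples from a span -/

lemma exists_succAbove_perm {m : ℕ} {r : Fin m → Fin (m + 1)}
    (hr : Function.Injective r) :
    ∃ (j : Fin (m + 1)) (σ : Equiv.Perm (Fin m)), r = j.succAbove ∘ σ := by
  classical
  have hnotsurj : ¬ Function.Surjective r := by
    intro hsurj
    have := Fintype.card_le_of_surjective r hsurj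
    simp at this
  obtain ⟨j, hj⟩ : ∃ j, ∀ i, r i ≠ j := by
    rw [Function.Surjective] at hnotsurj
    push_neg at hnotsurj
    obtain ⟨j, hj⟩ := hnotsurj
    exact ⟨j, fun i h => hj i h⟩
  have hex : ∀ i, ∃ z, j.succAbove z = r i := fun i => Fin.exists_succAbove_eq (hj i)
  choose σ0 hσ0 using hex
  have hσinj : Function.Injective σ0 := by
    intro a b hab
    apply hr
    rw [← hσ0 a, ← hσ0 b, hab]
  have hbij : Function.Bijective σ0 := (Finite.injective_iff_bijective).mp hσinj
  refine ⟨j, Equiv.ofBijective σ0 hbij, ?_⟩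
  funext i
  simp only [Function.comp_apply, Equiv.ofBijective_apply]
  exact (hσ0 i).symm

lemma wronskian_mem_span {m : ℕ} (f : Fin (m + 1) → Polynomial ℂ)
    (φ : Fin m → Polynomial ℂ)
    (hφ : ∀ i, φ i ∈ Submodule.span ℂ (Set.range f)) :
    _root_.wronskian m φ ∈ Submodule.span ℂ
      (Set.range fun j : Fin (m + 1) => _root_.wronskian m (f ∘ j.succAbove)) := by
  classical
  have hrep : ∀ i, ∃ c : Fin (m + 1) → ℂ, φ i = ∑ j, c j • f j := by
    intro i
    have := hφ i
    rw [Submodule.mem_span_range_iff_exists_fun] at this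
    obtain ⟨c, hc⟩ := this
    exact ⟨c, hc.symm⟩
  choose c hc using hrep
  have hφeq : φ = fun i => ∑ j ∈ Finset.univ, (fun i j => c i j • f j) i j := by
    funext i
    exact hc i
  have hexp : _root_.wronskian m φ = ∑ r ∈ Fintype.piFinset (fun _ : Fin m => (Finset.univ : Finset (Fin (m+1)))),
      (∏ i : Fin m, c i (r i)) • _root_.wronskian m (f ∘ r) := by
    rw [← wrM_apply, hφeq]
    rw [(wrM m).map_sum_finset (fun i j => c i j • f j) (fun _ => Finset.univ)]
    refine Finset.sum_congr rfl fun r _ => ?_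
    have : (fun i => c i (r i) • f (r i)) = fun i => c i (r i) • (f ∘ r) i := rfl
    rw [this, (wrM m).map_smul_univ (fun i => c i (r i)) (f ∘ r), wrM_apply]
  rw [hexp]
  apply Submodule.sum_mem
  intro r _
  apply Submodule.smul_mem
  by_cases hrinj : Function.Injective r
  · obtain ⟨j, σ, rfl⟩ := exists_succAbove_perm hrinj
    have : f ∘ (j.succAbove ∘ σ) = (f ∘ j.succAbove) ∘ σ := rfl
    rw [this, wronskian_perm m (f ∘ j.succAbove) σ]
    rcases intunits_smul_eq (Equiv.Perm.sign σ) (_root_.wronskian m (f ∘ j.succAbove)) with he | he <;>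
      rw [he]
    · exact Submodule.subset_span ⟨j, rfl⟩
    · exact Submodule.neg_mem _ (Submodule.subset_span ⟨j, rfl⟩)
  · have : ¬ Function.Injective (f ∘ r) ∨ _root_.wronskian m (f ∘ r) = 0 := by
      by_cases hf : Function.Injective (f ∘ r)
      · right
        exfalso
        exact hrinj (fun a b hab => hf (by rw [Function.comp_apply, Function.comp_apply, hab]))
      · left; exact hf
    rcases this with h | h
    · rw [wronskian_not_injective m _ h]
      exact Submodule.zero_mem _
    · rw [h]
      exact Submodule.zero_mem _

/-! ### Translation `x ↦ x + w` -/

noncomputable def tr (w : ℂ) : Polynomial ℂ ≃ₐ[ℂ] Polynomial ℂ := Polynomial.algEquivAevalXAddC w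

lemma tr_apply (w : ℂ) (p : Polynomial ℂ) : tr w p = p.comp (X + C w) := by
  have h : tr w p = Polynomial.aeval (X + C w) p := rfl
  rw [h, Polynomial.aeval_def, Polynomial.comp, Polynomial.algebraMap_eq]

lemma derivative_tr (w : ℂ) (p : Polynomial ℂ) :
    derivative (tr w p) = tr w (derivative p) := by
  rw [tr_apply, tr_apply, Polynomial.derivative_comp]
  simp

lemma iterate_derivative_tr (w : ℂ) (p : Polynomial ℂ) (k : ℕ) :
    derivative^[k] (tr w p) = tr w (derivative^[k] p) := by
  induction k with
  | zero => simp
  | succ k ih => rw [Function.iterate_succ_apply', ih, derivative_tr,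
      Function.iterate_succ_apply']

lemma tr_wronskian (w : ℂ) (m : ℕ) (φ : Fin m → Polynomial ℂ) :
    _root_.wronskian m (fun i => tr w (φ i)) = tr w (_root_.wronskian m φ) := by
  have h : tr w (_root_.wronskian m φ)
      = Matrix.det ((tr w).mapMatrix (Matrix.of fun i j : Fin m =>
          (fun p : Polynomial ℂ => derivative p)^[(i : ℕ)] (φ j))) :=
    AlgEquiv.map_det (tr w) _
  rw [h, _root_.wronskian]
  congr 1
  refine Matrix.ext fun i j => ?_
  simp only [AlgEquiv.mapMatrix_apply, Matrix.map_apply, Matrix.of_apply]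
  exact iterate_derivative_tr w (φ j) i

lemma tr_X_sub_C (w : ℂ) : tr w (X - C w) = X := by
  rw [tr_apply]
  simp [Polynomial.sub_comp]

lemma X_pow_dvd_iff_le_trailingDegree (g : Polynomial ℂ) (n : ℕ) :
    X ^ n ∣ g ↔ (n : ℕ∞) ≤ g.trailingDegree := by
  rw [Polynomial.X_pow_dvd_iff]
  constructor
  · intro h
    apply le_trailingDegree_of_coeff
    intro d hd
    exact h d (by exact_mod_cast hd)
  · intro h d hd
    apply Polynomial.coeff_eq_zero_of_lt_trailingDegree
    exact lt_of_lt_of_le (by exact_mod_cast hd) h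

lemma tr_dvd_iff (w : ℂ) (n : ℕ) (g : Polynomial ℂ) :
    (X - C w) ^ n ∣ g ↔ X ^ n ∣ tr w g := by
  constructor
  · intro ⟨q, hq⟩
    exact ⟨tr w q, by rw [hq, map_mul, map_pow, tr_X_sub_C]⟩
  · intro ⟨q, hq⟩
    refine ⟨(tr w).symm q, ?_⟩
    apply (tr w).injective
    rw [hq, map_mul, map_pow, tr_X_sub_C]
    simp

/-! ### Strictly monotone range pairing -/

lemma pairing_of_ranges {N : ℕ} (A B : Fin N → ℤ) (hA : StrictMono A) (hB : StrictMono B)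
    (h1 : ∀ i, ∃ j, A i = B j) (h2 : ∀ j, ∃ i, B j = A i) : ∀ i, A i = B i := by
  have hr : Set.range A = Set.range B := by
    apply Set.eq_of_subset_of_subset
    · rintro x ⟨i, rfl⟩
      obtain ⟨j, hj⟩ := h1 i
      exact ⟨j, hj.symm⟩
    · rintro x ⟨j, rfl⟩
      obtain ⟨i, hi⟩ := h2 j
      exact ⟨i, hi.symm⟩
  haveI : WellFoundedLT (Fin N) := inferInstance
  have := (hA.range_inj hB).mp hr
  intro i
  rw [this]

/-! ### The endgame -/

lemma endgame {N : ℕ} (hN : 2 ≤ N) (ξ : ℕ → ℕ) (K : ℤ)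
    (hK : ∀ j : Fin N, (((j : ℕ) + ξ (N - (j : ℕ)) : ℕ) : ℤ)
        + (((j.rev : ℕ) + ξ (N - (j.rev : ℕ)) : ℕ) : ℤ) = K)
    (i : ℕ) (h1 : 1 ≤ i) (h2 : i ≤ N - 1) :
    (ξ i : ℤ) - ξ (i + 1) = (ξ (N - i) : ℤ) - ξ (N - i + 1) := by
  have hiN : i < N := by omega
  have e1 := hK ⟨N - 1 - i, by omega⟩
  have e2 := hK ⟨i - 1, by omega⟩
  have hrev1 : ((⟨N - 1 - i, by omega⟩ : Fin N).rev : ℕ) = i := by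
    simp [Fin.rev]
    omega
  have hrev2 : ((⟨i - 1, by omega⟩ : Fin N).rev : ℕ) = N - i := by
    simp [Fin.rev]
    omega
  rw [hrev1] at e1
  rw [hrev2] at e2
  simp only [Fin.val_mk] at e1 e2
  have hidx1 : N - (N - 1 - i) = i + 1 := by omega
  have hidx2 : N - (i - 1) = N - i + 1 := by omega
  rw [hidx1] at e1
  rw [hidx2] at e2
  have hNi : N - (N - i) = i := by omega
  rw [hNi] at e2
  push_cast at e1 e2 ⊢
  omega

/-! ### ξ bounds -/

lemma xi_antitone (N : ℕ) (ξ : ℕ → ℕ)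
    (hanti : ∀ i, 1 ≤ i → i < N → ξ (i + 1) ≤ ξ i) :
    ∀ k l, 1 ≤ k → k ≤ l → l ≤ N → ξ l ≤ ξ k := by
  intro k l hk hkl hlN
  induction l with
  | zero => exact absurd hkl (by omega)
  | succ l ih =>
    rcases Nat.eq_or_lt_of_le hkl with h | h
    · rw [h]
    · have hkl' : k ≤ l := by omega
      calc ξ (l + 1) ≤ ξ l := hanti l (by omega) (by omega)
      _ ≤ ξ k := ih hkl' (by omega)

/-! ### Submodule extraction -/

lemma exists_mem_diff {X F1 F2 : Submodule ℂ (Polynomial ℂ)} [FiniteDimensional ℂ X]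
    {r1 r2 : ℕ} (h1 : finrank ℂ ↥(X ⊓ F1) = r1) (h2 : finrank ℂ ↥(X ⊓ F2) = r2)
    (hlt : r2 < r1) : ∃ f, f ∈ X ∧ f ∈ F1 ∧ f ∉ F2 := by
  haveI : FiniteDimensional ℂ ↥(X ⊓ F2) :=
    Submodule.finiteDimensional_of_le (inf_le_left : X ⊓ F2 ≤ X)
  have hnle : ¬ (X ⊓ F1 ≤ X ⊓ F2) := by
    intro hle
    have := Submodule.finrank_mono hle
    omega
  obtain ⟨x, hx1, hx2⟩ := SetLike.not_le_iff_exists.mp hnle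
  rw [Submodule.mem_inf] at hx1
  exact ⟨x, hx1.1, hx1.2, fun hmem => hx2 (Submodule.mem_inf.mpr ⟨hx1.1, hmem⟩)⟩

lemma mem_oscFlag (d : ℕ) (w : ℂ) (k : ℕ) (f : Polynomial ℂ) :
    f ∈ oscFlag d w k ↔ f ∈ degreeLT ℂ d ∧ (X - C w) ^ (d - k) ∣ f := by
  rw [oscFlag, Submodule.mem_inf, Submodule.restrictScalars_mem, Ideal.mem_span_singleton]

/-! ### Pairing extraction -/

lemma pairing_const {M S c : ℤ} {N : ℕ} (ee : Fin N → ℕ) (heemono : StrictMono ee)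
    (T : Fin N → ℤ) (hT : ∀ j, T j = S - c - ee j)
    (h1 : ∀ i, ∃ j, (M + ee i : ℤ) = T j) (h2 : ∀ j, ∃ i, T j = M + ee i) :
    ∀ i : Fin N, (ee i : ℤ) + ee i.rev = S - c - M := by
  have hA : StrictMono (fun i : Fin N => M + (ee i : ℤ)) := by
    intro a b h
    have := heemono h
    simp only
    omega
  have hB : StrictMono (fun j : Fin N => T (Fin.rev j)) := by
    intro a b h
    have hrev : ee (Fin.rev b) < ee (Fin.rev a) := heemono (Fin.rev_lt_rev.mpr h)
    simp only [hT]
    omega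
  have hmain := pairing_of_ranges _ _ hA hB ?h1 ?h2
  case h1 =>
    intro i
    obtain ⟨j, hj⟩ := h1 i
    exact ⟨Fin.rev j, by simp only [Fin.rev_rev]; exact hj⟩
  case h2 =>
    intro j
    obtain ⟨i, hi⟩ := h2 (Fin.rev j)
    exact ⟨i, hi⟩
  intro i
  have hi := hmain i
  simp only [hT] at hi
  omega

/-! ### The key per-point lemma -/

lemma key (m d : ℕ) (w : OnePoint ℂ) (ξ : ℕ → ℕ)
    (hanti : ∀ i, 1 ≤ i → i < m + 1 → ξ (i + 1) ≤ ξ i)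
    (hξ1 : ξ 1 ≤ d - (m + 1)) (hNd : m + 1 ≤ d)
    (X : Submodule ℂ (Polynomial ℂ)) (hXd : X ≤ Polynomial.degreeLT ℂ d)
    (hXN : finrank ℂ X = m + 1)
    (hcell : InSchubertCell (m + 1) d ξ (oscFlagP d w) X)
    (hsd : IsSelfDual (m + 1) X) :
    ∃ K : ℤ, ∀ j : Fin (m + 1),
      (((j : ℕ) + ξ (m + 1 - (j : ℕ)) : ℕ) : ℤ)
        + (((j.rev : ℕ) + ξ (m + 1 - (j.rev : ℕ)) : ℕ) : ℤ) = K := by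
  classical
  haveI hfdLT : FiniteDimensional ℂ (degreeLT ℂ d) :=
    Module.Finite.equiv (degreeLTEquiv ℂ d).symm
  haveI hXfd : FiniteDimensional ℂ X := Submodule.finiteDimensional_of_le hXd
  set ee : Fin (m + 1) → ℕ := fun j => (j : ℕ) + ξ (m + 1 - (j : ℕ)) with heedef
  have hxil : ∀ j : Fin (m + 1), ξ (m + 1 - (j : ℕ)) ≤ d - (m + 1) := by
    intro j
    have hj := j.isLt
    exact le_trans (xi_antitone (m + 1) ξ hanti 1 (m + 1 - (j : ℕ)) le_rfl (by omega) (by omega))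
      hξ1
  have heemono : StrictMono ee := by
    intro j j' hjj'
    have hv : (j : ℕ) < (j' : ℕ) := hjj'
    have hj' := j'.isLt
    have hx : ξ (m + 1 - (j : ℕ)) ≤ ξ (m + 1 - (j' : ℕ)) :=
      xi_antitone (m + 1) ξ hanti (m + 1 - (j' : ℕ)) (m + 1 - (j : ℕ))
        (by omega) (by omega) (by omega)
    simp only [heedef]
    omega
  have heed : ∀ j : Fin (m + 1), ee j + (m + 1 - (j : ℕ)) ≤ d := by
    intro j
    have h1 := hxil j
    have hj : (j : ℕ) < m + 1 := j.isLt
    have h3 : m + 1 - (j : ℕ) + (j : ℕ) = m + 1 := Nat.sub_add_cancel (le_of_lt hj)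
    have he : ee j = (j : ℕ) + ξ (m + 1 - (j : ℕ)) := rfl
    omega
  -- the basis extraction data per flag index
  have hextract : ∀ j : Fin (m + 1), ∃ f, f ∈ X ∧
      f ∈ oscFlagP d w (d - (j : ℕ) - ξ (m + 1 - (j : ℕ))) ∧
      f ∉ oscFlagP d w (d - (j : ℕ) - ξ (m + 1 - (j : ℕ)) - 1) := by
    intro j
    obtain ⟨hr1, hr2⟩ := hcell (j : ℕ) j.isLt
    exact exists_mem_diff hr1 hr2 (by have hj := j.isLt; omega)
  choose f hfX hfmem hfnmem using hextract
  obtain ⟨ψ, hψ⟩ := hsd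
  -- abbreviations
  have hSselfdual : dualSet (m + 1) X = (fun q => ψ * q) '' (X : Set (Polynomial ℂ)) := hψ
  have hgdual : ∀ j : Fin (m + 1),
      _root_.wronskian m (f ∘ j.succAbove) ∈ dualSet (m + 1) X := by
    intro j
    exact ⟨f ∘ j.succAbove, fun i => hfX _, rfl⟩
  set g : Fin (m + 1) → Polynomial ℂ := fun j => _root_.wronskian m (f ∘ j.succAbove) with hgdef
  -- sums
  set S : ℕ := ∑ i : Fin (m + 1), ee i with hSdef
  have hsumsplit : ∀ j : Fin (m + 1), ee j + ∑ i : Fin m, ee (j.succAbove i) = S := by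
    intro j
    rw [hSdef, Fin.sum_univ_succAbove ee j]
  have hsuccmono : ∀ j : Fin (m + 1), StrictMono (fun i : Fin m => ee (j.succAbove i)) :=
    fun j => heemono.comp (Fin.strictMono_succAbove j)
  have hc2succ : ∀ j : Fin (m + 1), c2 m ≤ ∑ i : Fin m, ee (j.succAbove i) :=
    fun j => c2_le_sum_of_strictMono _ (hsuccmono j)
  set T : Fin (m + 1) → ℕ := fun j => ∑ i : Fin m, ee (j.succAbove i) - c2 m with hTdef
  have hTz : ∀ j : Fin (m + 1), (T j : ℤ) = (S : ℤ) - c2 m - ee j := by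
    intro j
    have h1 := hsumsplit j
    have h2 := hc2succ j
    simp only [hTdef]
    omega
  have hTinj : Function.Injective T := by
    intro j j' h
    have e1 := hTz j
    have e2 := hTz j'
    apply heemono.injective
    have : (ee j : ℤ) = ee j' := by omega
    exact_mod_cast this
  -- case split on the point
  cases w with
  | infty =>
    -- the point at infinity: use degrees
    have hflag : ∀ k, oscFlagP d OnePoint.infty k = degreeLT ℂ k := fun k => rfl
    set t : Fin (m + 1) → ℕ := fun j => d - (j : ℕ) - ξ (m + 1 - (j : ℕ)) - 1 with htdef
    have htee : ∀ j : Fin (m + 1), (t j : ℤ) = (d : ℤ) - 1 - ee j := by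
      intro j
      have h1 := heed j
      have hj : (j : ℕ) < m + 1 := j.isLt
      have he : ee j = (j : ℕ) + ξ (m + 1 - (j : ℕ)) := rfl
      have ht : t j = d - (j : ℕ) - ξ (m + 1 - (j : ℕ)) - 1 := rfl
      omega
    have htanti : StrictAnti t := by
      intro j j' hjj'
      have h1 := htee j
      have h2 := htee j'
      have h3 := heemono hjj'
      omega
    have hdegf : ∀ j : Fin (m + 1), (f j).degree = (t j : WithBot ℕ) := by
      intro j
      have hmem := hfmem j
      have hnmem := hfnmem j
      rw [hflag, Polynomial.mem_degreeLT] at hmem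
      rw [hflag, Polynomial.mem_degreeLT] at hnmem
      push_neg at hnmem
      have hane : f j ≠ 0 := by
        intro h0
        rw [h0, Polynomial.degree_zero] at hnmem
        have hbot : ((d - (j : ℕ) - ξ (m + 1 - (j : ℕ)) - 1 : ℕ) : WithBot ℕ) ≤ ⊥ := hnmem
        simp at hbot
      have hdeq := Polynomial.degree_eq_natDegree hane
      rw [hdeq] at hmem hnmem ⊢
      have h1 : (f j).natDegree < d - (j : ℕ) - ξ (m + 1 - (j : ℕ)) := by exact_mod_cast hmem
      have h2 : d - (j : ℕ) - ξ (m + 1 - (j : ℕ)) - 1 ≤ (f j).natDegree := by exact_mod_cast hnmem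
      have : (f j).natDegree = t j := by
        have h3 := heed j
        have hj : (j : ℕ) < m + 1 := j.isLt
        have he : ee j = (j : ℕ) + ξ (m + 1 - (j : ℕ)) := rfl
        have ht : t j = d - (j : ℕ) - ξ (m + 1 - (j : ℕ)) - 1 := rfl
        have h4 : m + 1 - (j : ℕ) + (j : ℕ) = m + 1 := Nat.sub_add_cancel (le_of_lt hj)
        omega
      rw [this]
    have hfne : ∀ j, f j ≠ 0 := by
      intro j h0
      have := hdegf j
      rw [h0, Polynomial.degree_zero] at this
      exact (by simp : (⊥ : WithBot ℕ) ≠ ((t j : ℕ) : WithBot ℕ)) this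
    have hfli : LinearIndependent ℂ f :=
      linearIndependent_of_deg f t hdegf htanti.injective
    have hspan : Submodule.span ℂ (Set.range f) = X := by
      apply Submodule.eq_of_le_of_finrank_le
      · rw [Submodule.span_le]
        rintro x ⟨j, rfl⟩
        exact hfX j
      · rw [hXN, finrank_span_eq_card hfli, Fintype.card_fin]
    -- degree of the Wronskian basis of the dual
    set Tt : Fin (m + 1) → ℕ := fun j => ∑ i : Fin m, t (j.succAbove i) - c2 m with hTtdef
    have hsuccanti : ∀ j : Fin (m + 1), StrictAnti (fun i : Fin m => t (j.succAbove i)) :=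
      fun j => htanti.comp_strictMono (Fin.strictMono_succAbove j)
    have hdegg : ∀ j : Fin (m + 1), (g j).degree = (Tt j : WithBot ℕ) := by
      intro j
      rw [hgdef]
      exact degree_wronskian_eq m (f ∘ j.succAbove) (fun i => t (j.succAbove i))
        (hsuccanti j) (fun i => hdegf _)
    have hc2succ' : ∀ j : Fin (m + 1), c2 m ≤ ∑ i : Fin m, t (j.succAbove i) := by
      intro j
      have hmono : StrictMono (fun i : Fin m => t (j.succAbove (Fin.rev i))) := by
        intro a b hab
        exact (hsuccanti j) (Fin.rev_lt_rev.mpr hab)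
      have h1 := c2_le_sum_of_strictMono _ hmono
      have h2 : ∑ i : Fin m, t (j.succAbove (Fin.rev i)) = ∑ i : Fin m, t (j.succAbove i) :=
        Fintype.sum_equiv (Equiv.ofBijective Fin.rev Fin.rev_bijective) _ _ (fun i => rfl)
      omega
    have hStS : ∀ j : Fin (m + 1), t j + ∑ i : Fin m, t (j.succAbove i)
        = ∑ i : Fin (m + 1), t i := by
      intro j
      rw [Fin.sum_univ_succAbove t j]
    have hTtz : ∀ j : Fin (m + 1), (Tt j : ℤ)
        = (∑ i : Fin (m + 1), t i : ℕ) - c2 m - t j := by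
      intro j
      have h1 := hStS j
      have h2 := hc2succ' j
      simp only [hTtdef]
      omega
    have hTtinj : Function.Injective Tt := by
      intro j j' h
      have e1 := hTtz j
      have e2 := hTtz j'
      apply htanti.injective
      have : (t j : ℤ) = t j' := by omega
      exact_mod_cast this
    have hgne : ∀ j, g j ≠ 0 := by
      intro j h0
      have := hdegg j
      rw [h0, Polynomial.degree_zero] at this
      exact (by simp : (⊥ : WithBot ℕ) ≠ ((Tt j : ℕ) : WithBot ℕ)) this
    have hψne : ψ ≠ 0 := by
      have hmem := hgdual 0
      rw [hSselfdual] at hmem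
      obtain ⟨x, _, hx⟩ := hmem
      have hgx : g 0 = ψ * x := by
        simp only [hgdef]
        exact hx.symm
      intro h0
      apply hgne 0
      rw [hgx, h0, zero_mul]
    have hψd := Polynomial.degree_eq_natDegree hψne
    -- h2 : each Tt j is of the form natDegree ψ + t i
    have h2 : ∀ j : Fin (m + 1), ∃ i, (Tt j : ℤ) = (ψ.natDegree : ℤ) + t i := by
      intro j
      have hmem := hgdual j
      rw [hSselfdual] at hmem
      obtain ⟨x, hxX, hx⟩ := hmem
      have hgx : g j = ψ * x := by
        simp only [hgdef]
        exact hx.symm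
      have hxne : x ≠ 0 := by
        intro h0
        apply hgne j
        rw [hgx, h0, mul_zero]
      have hdx : (g j).degree = ψ.degree + x.degree := by
        rw [hgx]
        exact Polynomial.degree_mul
      have hxmem : x ∈ Submodule.span ℂ (Set.range f) := by rw [hspan]; exact hxX
      obtain ⟨i, hi⟩ := deg_mem_of_mem_span f t hdegf htanti.injective hxmem hxne
      refine ⟨i, ?_⟩
      rw [hdegg j, hψd, hi] at hdx
      have : ((Tt j : ℕ) : WithBot ℕ) = ((ψ.natDegree + t i : ℕ) : WithBot ℕ) := by
        rw [hdx]; push_cast; ring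
      have := WithBot.coe_injective this
      exact_mod_cast this
    -- h1 : each natDegree ψ + t i is some Tt j
    have h1 : ∀ i : Fin (m + 1), ∃ j, (ψ.natDegree : ℤ) + t i = (Tt j : ℤ) := by
      intro i
      have hmem : ψ * f i ∈ dualSet (m + 1) X := by
        rw [hSselfdual]
        exact ⟨f i, hfX i, rfl⟩
      obtain ⟨φ, hφX, hφeq0⟩ := hmem
      have hφeq : ψ * f i = _root_.wronskian m φ := hφeq0
      have hwmem : _root_.wronskian m φ ∈ Submodule.span ℂ
          (Set.range fun j : Fin (m + 1) => _root_.wronskian m (f ∘ j.succAbove)) := by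
        apply wronskian_mem_span
        intro i'
        rw [hspan]
        exact hφX i'
      have hne : ψ * f i ≠ 0 := mul_ne_zero hψne (hfne i)
      have hwne : _root_.wronskian m φ ≠ 0 := by rw [← hφeq]; exact hne
      obtain ⟨j, hj⟩ := deg_mem_of_mem_span g Tt hdegg hTtinj (by exact hwmem) hwne
      refine ⟨j, ?_⟩
      have hdeq : (ψ * f i).degree = ((ψ.natDegree + t i : ℕ) : WithBot ℕ) := by
        rw [Polynomial.degree_mul, hψd, hdegf i]
        push_cast
        ring
      rw [hφeq, hj] at hdeq
      have := WithBot.coe_injective hdeq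
      have : Tt j = ψ.natDegree + t i := by exact_mod_cast this
      omega
    -- pairing on t ∘ rev
    have hpc := pairing_const (M := (ψ.natDegree : ℤ))
      (S := ((∑ i : Fin (m + 1), t i : ℕ) : ℤ))
      (c := (c2 m : ℤ)) (fun i => t (Fin.rev i))
      (fun a b hab => htanti (Fin.rev_lt_rev.mpr hab))
      (fun j => (Tt (Fin.rev j) : ℤ)) (fun j => hTtz (Fin.rev j))
      ?hh1 ?hh2
    case hh1 =>
      intro i
      obtain ⟨j, hj⟩ := h1 (Fin.rev i)
      refine ⟨Fin.rev j, ?_⟩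
      show (ψ.natDegree : ℤ) + ((t (Fin.rev i) : ℕ) : ℤ) = ((Tt (Fin.rev j).rev : ℕ) : ℤ)
      rw [Fin.rev_rev]
      exact hj
    case hh2 =>
      intro j
      obtain ⟨i, hi⟩ := h2 (Fin.rev j)
      refine ⟨Fin.rev i, ?_⟩
      show ((Tt (Fin.rev j) : ℕ) : ℤ) = (ψ.natDegree : ℤ) + ((t (Fin.rev i).rev : ℕ) : ℤ)
      rw [Fin.rev_rev]
      exact hi
    have hpair : ∀ j : Fin (m + 1), (t j : ℤ) + (t (Fin.rev j) : ℤ)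
        = ((∑ i : Fin (m + 1), t i : ℕ) : ℤ) - (c2 m : ℤ) - (ψ.natDegree : ℤ) := by
      intro j
      have hh := hpc (Fin.rev j)
      simp only [Fin.rev_rev] at hh
      exact hh
    refine ⟨2 * ((d : ℤ) - 1) - (((∑ i : Fin (m + 1), t i : ℕ) : ℤ)
      - (c2 m : ℤ) - (ψ.natDegree : ℤ)), ?_⟩
    intro j
    have hj1 := hpair j
    have e1 := htee j
    have e2 := htee (Fin.rev j)
    have e3 : (ee j : ℤ) = (((j : ℕ) + ξ (m + 1 - (j : ℕ)) : ℕ) : ℤ) := rfl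
    have e4 : (ee (Fin.rev j) : ℤ)
        = (((Fin.rev j : ℕ) + ξ (m + 1 - (Fin.rev j : ℕ)) : ℕ) : ℤ) := rfl
    omega
  | coe w =>
    -- a finite point: use trailing degrees after translation
    have hflag : ∀ k, oscFlagP d (w : OnePoint ℂ) k = oscFlag d w k := fun k => rfl
    have hdvd : ∀ j : Fin (m + 1), (Polynomial.X - C w) ^ (ee j) ∣ f j ∧
        ¬ (Polynomial.X - C w) ^ (ee j + 1) ∣ f j := by
      intro j
      have hmem := hfmem j
      have hnmem := hfnmem j
      rw [hflag, mem_oscFlag] at hmem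
      rw [hflag, mem_oscFlag] at hnmem
      have hj := j.isLt
      have hx := hxil j
      have he : ee j = (j : ℕ) + ξ (m + 1 - (j : ℕ)) := rfl
      have hj' : (j : ℕ) < m + 1 := j.isLt
      have h4 : m + 1 - (j : ℕ) + (j : ℕ) = m + 1 := Nat.sub_add_cancel (le_of_lt hj')
      have ha1 : d - (d - (j : ℕ) - ξ (m + 1 - (j : ℕ))) = ee j := by omega
      have ha2 : d - (d - (j : ℕ) - ξ (m + 1 - (j : ℕ)) - 1) = ee j + 1 := by omega
      constructor
      · rw [← ha1]; exact hmem.2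
      · intro hdd
        exact hnmem ⟨hXd (hfX j), by rw [ha2]; exact hdd⟩
    set u : Fin (m + 1) → Polynomial ℂ := fun j => tr w (f j) with hudef
    have htu : ∀ j : Fin (m + 1), (u j).trailingDegree = (ee j : ℕ∞) := by
      intro j
      obtain ⟨hd1, hd2⟩ := hdvd j
      have h1 : (ee j : ℕ∞) ≤ (u j).trailingDegree := by
        rw [← X_pow_dvd_iff_le_trailingDegree]
        rw [← tr_dvd_iff]
        exact hd1
      have h2 : ¬ ((ee j + 1 : ℕ) : ℕ∞) ≤ (u j).trailingDegree := by
        rw [← X_pow_dvd_iff_le_trailingDegree, ← tr_dvd_iff]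
        exact hd2
      push_neg at h2
      have h3 : (u j).trailingDegree < (ee j : ℕ∞) + 1 := by
        have : ((ee j + 1 : ℕ) : ℕ∞) = (ee j : ℕ∞) + 1 := by push_cast; ring
        rw [← this]
        exact h2
      exact le_antisymm ((ENat.lt_add_one_iff (ENat.coe_ne_top _)).mp h3) h1
    have hune : ∀ j, u j ≠ 0 := by
      intro j h0
      have := htu j
      rw [h0, Polynomial.trailingDegree_zero] at this
      exact (by simp : (⊤ : ℕ∞) ≠ (ee j : ℕ∞)) this
    have hfne : ∀ j, f j ≠ 0 := by
      intro j h0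
      apply hune j
      rw [hudef]
      simp only [h0, map_zero]
    have huli : LinearIndependent ℂ u := linearIndependent_of_tdeg u ee htu heemono.injective
    have hfli : LinearIndependent ℂ f := by
      have : u = ⇑((tr w).toLinearMap) ∘ f := rfl
      rw [this] at huli
      exact LinearIndependent.of_comp _ huli
    have hspan : Submodule.span ℂ (Set.range f) = X := by
      apply Submodule.eq_of_le_of_finrank_le
      · rw [Submodule.span_le]
        rintro x ⟨j, rfl⟩
        exact hfX j
      · rw [hXN, finrank_span_eq_card hfli, Fintype.card_fin]
    have huspan : Submodule.map ((tr w).toLinearMap) X = Submodule.span ℂ (Set.range u) := by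
      rw [← hspan, Submodule.map_span]
      congr 1
      rw [← Set.range_comp]
      rfl
    -- trailing degrees of dual basis
    have htrg : ∀ j : Fin (m + 1), (tr w (g j)).trailingDegree = (T j : ℕ∞) := by
      intro j
      have hcomm : tr w (g j) = _root_.wronskian m (fun i => tr w ((f ∘ j.succAbove) i)) :=
        (tr_wronskian w m (f ∘ j.succAbove)).symm
      rw [hcomm]
      exact trailingDegree_wronskian_eq m _ (fun i => ee (j.succAbove i)) (hsuccmono j)
        (fun i => htu _)
    have hgne : ∀ j, g j ≠ 0 := by
      intro j h0
      have := htrg j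
      rw [h0, map_zero, Polynomial.trailingDegree_zero] at this
      exact (by simp : (⊤ : ℕ∞) ≠ (T j : ℕ∞)) this
    have hψne : ψ ≠ 0 := by
      have hmem := hgdual 0
      rw [hSselfdual] at hmem
      obtain ⟨x, _, hx⟩ := hmem
      have hgx : g 0 = ψ * x := by
        simp only [hgdef]
        exact hx.symm
      intro h0
      apply hgne 0
      rw [hgx, h0, zero_mul]
    have hψtne : tr w ψ ≠ 0 := by
      intro h0
      exact hψne ((map_eq_zero_iff _ (tr w).injective).mp h0)
    set Mψ : ℕ := (tr w ψ).natTrailingDegree with hMψdef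
    have hψtd : (tr w ψ).trailingDegree = (Mψ : ℕ∞) :=
      Polynomial.trailingDegree_eq_natTrailingDegree hψtne
    have h2 : ∀ j : Fin (m + 1), ∃ i, (T j : ℤ) = (Mψ : ℤ) + ee i := by
      intro j
      have hmem := hgdual j
      rw [hSselfdual] at hmem
      obtain ⟨x, hxX, hx⟩ := hmem
      have hgx : g j = ψ * x := by
        simp only [hgdef]
        exact hx.symm
      have hxne : x ≠ 0 := by
        intro h0
        apply hgne j
        rw [hgx, h0, mul_zero]
      have hxtne : tr w x ≠ 0 := by
        intro h0
        exact hxne ((map_eq_zero_iff _ (tr w).injective).mp h0)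
      have hdx : (tr w (g j)).trailingDegree
          = (tr w ψ).trailingDegree + (tr w x).trailingDegree := by
        rw [hgx, map_mul]
        exact Polynomial.trailingDegree_mul
      have hxmem : tr w x ∈ Submodule.span ℂ (Set.range u) := by
        rw [← huspan]
        exact Submodule.mem_map_of_mem hxX
      obtain ⟨i, hi⟩ := tdeg_mem_of_mem_span u ee htu heemono.injective hxmem hxtne
      refine ⟨i, ?_⟩
      rw [htrg j, hψtd, hi] at hdx
      have : ((T j : ℕ) : ℕ∞) = ((Mψ + ee i : ℕ) : ℕ∞) := by
        rw [hdx]; push_cast; ring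
      have : T j = Mψ + ee i := by exact_mod_cast this
      omega
    have h1 : ∀ i : Fin (m + 1), ∃ j, ((Mψ : ℤ) + ee i : ℤ) = (T j : ℤ) := by
      intro i
      have hmem : ψ * f i ∈ dualSet (m + 1) X := by
        rw [hSselfdual]
        exact ⟨f i, hfX i, rfl⟩
      obtain ⟨φ, hφX, hφeq0⟩ := hmem
      have hφeq : ψ * f i = _root_.wronskian m φ := hφeq0
      have htreq : tr w (ψ * f i) = _root_.wronskian m (fun i' => tr w (φ i')) := by
        rw [hφeq]
        exact (tr_wronskian w m φ).symm
      have hwmem : _root_.wronskian m (fun i' => tr w (φ i')) ∈ Submodule.span ℂ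
          (Set.range fun j : Fin (m + 1) => _root_.wronskian m (u ∘ j.succAbove)) := by
        apply wronskian_mem_span
        intro i'
        rw [← huspan]
        exact Submodule.mem_map_of_mem (hφX i')
      have hne : tr w (ψ * f i) ≠ 0 := by
        intro h0
        exact (mul_ne_zero hψne (hfne i)) ((map_eq_zero_iff _ (tr w).injective).mp h0)
      have hGdeg : ∀ j : Fin (m + 1),
          (_root_.wronskian m (u ∘ j.succAbove)).trailingDegree = (T j : ℕ∞) := by
        intro j
        exact trailingDegree_wronskian_eq m _ (fun i' => ee (j.succAbove i')) (hsuccmono j)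
          (fun i' => htu _)
      obtain ⟨j, hj⟩ := tdeg_mem_of_mem_span _ T hGdeg hTinj hwmem (by rw [← htreq]; exact hne)
      refine ⟨j, ?_⟩
      have hdeq : (tr w (ψ * f i)).trailingDegree = ((Mψ + ee i : ℕ) : ℕ∞) := by
        rw [map_mul, Polynomial.trailingDegree_mul, hψtd, htu i]
        push_cast
        ring
      rw [htreq, hj] at hdeq
      have : Mψ + ee i = T j := by exact_mod_cast hdeq.symm
      omega
    have hpc := pairing_const (M := (Mψ : ℤ)) (S := (S : ℤ)) (c := (c2 m : ℤ))
      ee heemono (fun j => (T j : ℤ)) (fun j => hTz j) h1 h2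
    refine ⟨(S : ℤ) - c2 m - Mψ, ?_⟩
    intro j
    exact hpc j

end Stmt12Aux

/-- If the intersection of osculating Schubert cells (with `|ξ| = N(d-N)`) contains a
self-dual space `X`, then every partition `ξ^(s)` satisfies the symmetry
`ξ_i − ξ_{i+1} = ξ_{N−i} − ξ_{N−i+1}` for `i = 1, …, N−1`. -/
theorem stmt12 (N d n : ℕ) (hNd : N ≤ d)
    (z : Fin n → OnePoint ℂ) (hz : Function.Injective z)
    (ξ : Fin n → ℕ → ℕ)
    (hanti : ∀ s, ∀ i, 1 ≤ i → i < N → ξ s (i + 1) ≤ ξ s i)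
    (hξ1 : ∀ s, ξ s 1 ≤ d - N)
    (hsum : ∑ s, ∑ i ∈ Finset.Icc 1 N, ξ s i = N * (d - N))
    (X : Submodule ℂ (Polynomial ℂ)) (hXd : X ≤ Polynomial.degreeLT ℂ d)
    (hXN : finrank ℂ X = N)
    (hcell : ∀ s, InSchubertCell N d (ξ s) (oscFlagP d (z s)) X)
    (hsd : IsSelfDual N X) :
    ∀ s, ∀ i, 1 ≤ i → i ≤ N - 1 →
      (ξ s i : ℤ) - ξ s (i + 1) = (ξ s (N - i) : ℤ) - ξ s (N - i + 1) := by
  intro s i h1 h2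
  have hN2 : 2 ≤ N := by omega
  obtain ⟨m, rfl⟩ : ∃ m, N = m + 1 := ⟨N - 1, by omega⟩
  obtain ⟨K, hK⟩ := Stmt12Aux.key m d (z s) (ξ s) (hanti s) (hξ1 s) hNd X hXd hXN (hcell s) hsd
  exact Stmt12Aux.endgame hN2 (ξ s) K hK i h1 h2
end

section
/- Let N ≤ d, let z_1, …, z_n ∈ ℂ be distinct, let ξ^{(1)}, …, ξ^{(n)} be partitions with at most N parts, each with ξ^{(s)}_1 ≤ d−N, and let k_1, …, k_n ∈ ℕ. Set p = ∏_{s=1}^n (x − z_s)^{k_s}, K = k_1 + ⋯ + k_n, and for each s let ξ^{(s)} + k_s denote the partition (ξ^{(s)}_1 + k_s, …, ξ^{(s)}_N + k_s). Then the map X ↦ p·X is a bijection from ⋂_{s=1}^n Ω_{ξ^{(s)}}(F(z_s)) ⊆ Gr(N,d) onto ⋂_{s=1}^n Ω_{ξ^{(s)}+k_s}(F(z_s)) ⊆ Gr(N,d+K), where in the target the osculating flags F(z_s) are taken inside ℂ_{d+K}[x]. -/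
open Module Polynomial

lemma memOsc {D m : ℕ} {z : ℂ} {g : ℂ[X]} :
    g ∈ oscFlag D z m ↔ g.degree < (D : WithBot ℕ) ∧ (X - C z) ^ (D - m) ∣ g := by
  simp [oscFlag, Submodule.mem_inf, mem_degreeLT, Ideal.mem_span_singleton,
    Submodule.restrictScalars_mem]

lemma pMonic {n : ℕ} (z : Fin n → ℂ) (k : Fin n → ℕ) :
    (∏ s, (X - C (z s)) ^ k s).Monic :=
  monic_prod_of_monic _ _ fun s _ => (monic_X_sub_C (z s)).pow _

lemma pDeg {n : ℕ} (z : Fin n → ℂ) (k : Fin n → ℕ) :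
    (∏ s, (X - C (z s)) ^ k s).natDegree = ∑ s, k s := by
  rw [natDegree_prod _ _ (fun s _ => pow_ne_zero _ (X_sub_C_ne_zero (z s)))]
  simp [natDegree_pow]

lemma pDvd {n : ℕ} {z : Fin n → ℂ} (hz : Function.Injective z) (k : Fin n → ℕ)
    (s : Fin n) (e : ℕ) (f : ℂ[X]) :
    (X - C (z s)) ^ (e + k s) ∣ (∏ t, (X - C (z t)) ^ k t) * f ↔ (X - C (z s)) ^ e ∣ f := by
  have hq : (∏ t, (X - C (z t)) ^ k t)
      = (X - C (z s)) ^ k s * ∏ t ∈ Finset.univ.erase s, (X - C (z t)) ^ k t :=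
    (Finset.mul_prod_erase _ _ (Finset.mem_univ s)).symm
  set q := ∏ t ∈ Finset.univ.erase s, (X - C (z t)) ^ k t with hqdef
  have hcop : IsCoprime ((X - C (z s)) ^ e) q :=
    IsCoprime.prod_right fun t ht =>
      (pairwise_coprime_X_sub_C hz (Finset.ne_of_mem_erase ht).symm).pow
  constructor
  · intro h
    rw [hq, add_comm, pow_add, mul_assoc] at h
    have h0 : (X - C (z s)) ^ k s ≠ 0 := pow_ne_zero _ (X_sub_C_ne_zero (z s))
    exact hcop.dvd_of_dvd_mul_left ((mul_dvd_mul_iff_left h0).mp h)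
  · rintro ⟨c, rfl⟩
    exact ⟨q * c, by rw [hq]; ring⟩

lemma pMem {n : ℕ} (z : Fin n → ℂ) (k : Fin n → ℕ) (d : ℕ) (f : ℂ[X]) :
    (∏ s, (X - C (z s)) ^ k s) * f ∈ degreeLT ℂ (d + ∑ s, k s) ↔ f ∈ degreeLT ℂ d := by
  rcases eq_or_ne f 0 with rfl | hf
  · simp [mem_degreeLT]
  · rw [mem_degreeLT, mem_degreeLT, degree_mul, degree_eq_natDegree hf,
      degree_eq_natDegree (pMonic z k).ne_zero, pDeg, ← Nat.cast_add, Nat.cast_lt, Nat.cast_lt]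
    omega

lemma mapOsc {n : ℕ} {z : Fin n → ℂ} (hz : Function.Injective z) (k : Fin n → ℕ)
    (d : ℕ) {Xs : Submodule ℂ (Polynomial ℂ)} (hX : Xs ≤ degreeLT ℂ d)
    (s : Fin n) (e : ℕ) (hed : e ≤ d) :
    Submodule.map (LinearMap.mulLeft ℂ (∏ t, (X - C (z t)) ^ k t))
        (Xs ⊓ oscFlag d (z s) (d - e))
      = Submodule.map (LinearMap.mulLeft ℂ (∏ t, (X - C (z t)) ^ k t)) Xs
        ⊓ oscFlag (d + ∑ t, k t) (z s) ((d + ∑ t, k t) - (e + k s)) := by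
  have hkK : k s ≤ ∑ t, k t := Finset.single_le_sum (fun _ _ => Nat.zero_le _) (Finset.mem_univ s)
  have he1 : d - (d - e) = e := by omega
  have he2 : (d + ∑ t, k t) - ((d + ∑ t, k t) - (e + k s)) = e + k s := by omega
  ext g
  simp only [Submodule.mem_map, Submodule.mem_inf, LinearMap.mulLeft_apply, memOsc, he1, he2]
  constructor
  · rintro ⟨f, ⟨hfX, _, hdvd⟩, rfl⟩
    exact ⟨⟨f, hfX, rfl⟩, mem_degreeLT.mp ((pMem z k d f).mpr (hX hfX)),
      (pDvd hz k s e f).mpr hdvd⟩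
  · rintro ⟨⟨f, hfX, rfl⟩, _, hdvd⟩
    exact ⟨f, ⟨hfX, mem_degreeLT.mp (hX hfX), (pDvd hz k s e f).mp hdvd⟩, rfl⟩

/-- Multiplication by `p = ∏ (x - z_s)^(k_s)` is a bijection from the intersection of the
Schubert cells `Ω_{ξ^(s)}(F(z_s)) ⊆ Gr(N,d)` onto the intersection of the Schubert cells
`Ω_{ξ^(s)+k_s}(F(z_s)) ⊆ Gr(N,d+K)`, where `K = k_1 + ⋯ + k_n`. -/
theorem stmt14 (N d n : ℕ) (hNd : N ≤ d)
    (z : Fin n → ℂ) (hz : Function.Injective z)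
    (ξ : Fin n → ℕ → ℕ)
    (hanti : ∀ s, ∀ i, 1 ≤ i → i < N → ξ s (i + 1) ≤ ξ s i)
    (hξ1 : ∀ s, ξ s 1 ≤ d - N)
    (k : Fin n → ℕ) :
    Set.BijOn
      (fun X : Submodule ℂ (Polynomial ℂ) =>
        Submodule.map
          (LinearMap.mulLeft ℂ (∏ s, (Polynomial.X - Polynomial.C (z s)) ^ k s)) X)
      {X | X ≤ Polynomial.degreeLT ℂ d ∧ finrank ℂ X = N ∧
        ∀ s, InSchubertCell N d (ξ s) (oscFlag d (z s)) X}
      {X | X ≤ Polynomial.degreeLT ℂ (d + ∑ s, k s) ∧ finrank ℂ X = N ∧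
        ∀ s, InSchubertCell N (d + ∑ s, k s) (fun i => ξ s i + k s)
          (oscFlag (d + ∑ s, k s) (z s)) X} := by
  set K := ∑ s, k s with hK
  set p := ∏ s, (X - C (z s)) ^ k s with hp
  have hpne : p ≠ 0 := (pMonic z k).ne_zero
  have hinj : Function.Injective (LinearMap.mulLeft ℂ p) := fun a b hab =>
    mul_left_cancel₀ hpne (by simpa using hab)
  have hfr : ∀ W : Submodule ℂ (Polynomial ℂ),
      finrank ℂ ↥(Submodule.map (LinearMap.mulLeft ℂ p) W) = finrank ℂ ↥W := fun W =>
    ((Submodule.equivMapOfInjective _ hinj W).finrank_eq).symm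
  have hkK : ∀ s, k s ≤ K := fun s =>
    Finset.single_le_sum (fun _ _ => Nat.zero_le _) (Finset.mem_univ s)
  have hb : ∀ s i, 1 ≤ i → i ≤ N → ξ s i ≤ d - N := by
    intro s i h1 h2
    have key : ∀ m, 1 ≤ m → m ≤ N → ξ s m ≤ ξ s 1 := by
      intro m
      induction m with
      | zero => omega
      | succ a ih =>
        intro h1 h2
        rcases Nat.lt_or_ge 1 (a + 1) with h | h
        · exact le_trans (hanti s a (by omega) (by omega)) (ih (by omega) (by omega))
        · have : a + 1 = 1 := by omega
          rw [this]
      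
    exact le_trans (key i h1 h2) (hξ1 s)
  have schEq : ∀ (Xs : Submodule ℂ (Polynomial ℂ)), Xs ≤ degreeLT ℂ d → ∀ s,
      (InSchubertCell N d (ξ s) (oscFlag d (z s)) Xs ↔
       InSchubertCell N (d + K) (fun i => ξ s i + k s) (oscFlag (d + K) (z s))
         (Submodule.map (LinearMap.mulLeft ℂ p) Xs)) := by
    intro Xs hXs s
    have main : ∀ e, e ≤ d →
        finrank ℂ ↥(Submodule.map (LinearMap.mulLeft ℂ p) Xs
            ⊓ oscFlag (d + K) (z s) ((d + K) - (e + k s)))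
          = finrank ℂ ↥(Xs ⊓ oscFlag d (z s) (d - e)) := by
      intro e he
      rw [← mapOsc hz k d hXs s e he]
      exact hfr _
    unfold InSchubertCell
    constructor
    · intro h j hj
      have hξb := hb s (N - j) (by omega) (by omega)
      obtain ⟨h1, h2⟩ := h j hj
      have e1 : (d + K) - j - (ξ s (N - j) + k s) = (d + K) - ((j + ξ s (N - j)) + k s) := by
        omega
      have e2 : (d + K) - j - (ξ s (N - j) + k s) - 1
          = (d + K) - ((j + ξ s (N - j) + 1) + k s) := by omega
      have e3 : d - j - ξ s (N - j) = d - (j + ξ s (N - j)) := by omega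
      have e4 : d - j - ξ s (N - j) - 1 = d - (j + ξ s (N - j) + 1) := by omega
      rw [e3] at h1
      rw [e4] at h2
      constructor
      · rw [e1, main _ (by omega)]; exact h1
      · rw [e2, main _ (by omega)]; exact h2
    · intro h j hj
      have hξb := hb s (N - j) (by omega) (by omega)
      obtain ⟨h1, h2⟩ := h j hj
      have e1 : (d + K) - j - (ξ s (N - j) + k s) = (d + K) - ((j + ξ s (N - j)) + k s) := by
        omega
      have e2 : (d + K) - j - (ξ s (N - j) + k s) - 1
          = (d + K) - ((j + ξ s (N - j) + 1) + k s) := by omega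
      have e3 : d - j - ξ s (N - j) = d - (j + ξ s (N - j)) := by omega
      have e4 : d - j - ξ s (N - j) - 1 = d - (j + ξ s (N - j) + 1) := by omega
      rw [e1, main _ (by omega)] at h1
      rw [e2, main _ (by omega)] at h2
      constructor
      · rw [e3]; exact h1
      · rw [e4]; exact h2
  refine ⟨?_, ?_, ?_⟩
  · -- MapsTo
    rintro Xs ⟨hXd, hXr, hXc⟩
    refine ⟨?_, ?_, fun s => (schEq Xs hXd s).mp (hXc s)⟩
    · rintro g ⟨f, hf, rfl⟩
      simpa using (pMem z k d f).mpr (hXd hf)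
    · rw [hfr]; exact hXr
  · -- InjOn
    exact (Submodule.map_injective_of_injective hinj).injOn
  · -- SurjOn
    rintro Y ⟨hYd, hYr, hYc⟩
    haveI : FiniteDimensional ℂ ↥(degreeLT ℂ (d + K)) :=
      Module.Finite.equiv (degreeLTEquiv ℂ (d + K)).symm
    haveI : FiniteDimensional ℂ ↥Y := Submodule.finiteDimensional_of_le hYd
    have hdvd : ∀ g ∈ Y, p ∣ g := by
      rcases Nat.eq_zero_or_pos N with hN0 | hN1
      · have hbot : Y = ⊥ := Submodule.finrank_eq_zero.mp (by rw [hYr, hN0])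
        intro g hg
        rw [hbot, Submodule.mem_bot] at hg
        rw [hg]
        exact dvd_zero _
      · intro g hg
        have hs : ∀ s, ((X - C (z s)) ^ k s) ∣ g := by
          intro s
          have hcell := (hYc s) 0 hN1
          have hle : Y ⊓ oscFlag (d + K) (z s)
              ((d + K) - 0 - (ξ s (N - 0) + k s)) ≤ Y := inf_le_left
          have heq : Y ⊓ oscFlag (d + K) (z s) ((d + K) - 0 - (ξ s (N - 0) + k s)) = Y :=
            Submodule.eq_of_le_of_finrank_le hle (by
              rw [hYr]
              have h7 : finrank ℂ ↥(Y ⊓ oscFlag (d + K) (z s)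
                  ((d + K) - 0 - (ξ s (N - 0) + k s))) = N - 0 := hcell.1
              omega)
          have hYF : Y ≤ oscFlag (d + K) (z s) ((d + K) - 0 - (ξ s (N - 0) + k s)) :=
            (le_of_eq heq.symm).trans inf_le_right
          have hgF := (memOsc.mp (hYF hg)).2
          have hexp : (d + K) - ((d + K) - 0 - (ξ s (N - 0) + k s)) = ξ s (N - 0) + k s := by
            have h5 := hb s (N - 0) (by omega) (by omega)
            have h6 := hkK s
            omega
          rw [hexp] at hgF
          exact dvd_trans (pow_dvd_pow _ (by omega)) hgF
        exact Finset.prod_dvd_of_coprime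
          (fun s _ t _ hst => (pairwise_coprime_X_sub_C hz hst).pow) (fun s _ => hs s)
    have hmap : Submodule.map (LinearMap.mulLeft ℂ p) (Submodule.comap (LinearMap.mulLeft ℂ p) Y)
        = Y := by
      rw [Submodule.map_comap_eq]
      refine inf_eq_right.mpr ?_
      intro g hg
      obtain ⟨c, hc⟩ := hdvd g hg
      exact ⟨c, by simpa using hc.symm⟩
    set Xc := Submodule.comap (LinearMap.mulLeft ℂ p) Y with hXc
    have hXcd : Xc ≤ degreeLT ℂ d := by
      intro f hf
      exact (pMem z k d f).mp (hYd hf)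
    refine ⟨Xc, ⟨hXcd, ?_, ?_⟩, hmap⟩
    · rw [← hfr Xc, hmap]; exact hYr
    · intro s
      refine (schEq Xc hXcd s).mpr ?_
      rw [hmap]
      exact hYc s
end
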